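/- arXiv:2101.12271 — 4 statements merged into one kernel-verified Lean document; each statement's English description precedes it below -/
import Mathlib

section
/- Let γ be a numbering and let A, B ⊆ ℕ with A ≤_γ B. If γ is (2, B)-divisible, then A is Turing reducible to B (A ≤_T B). -/
open Nat Part

/-- Partial functions on `ℕ` computable relative to an oracle set `A`. -/
inductive RecursiveInSet (A : Set ℕ) : (ℕ →. ℕ) → Prop
  | zero : RecursiveInSet A (pure 0)
  | succ : RecursiveInSet A ↑Nat.succ
  | left : RecursiveInSet A ↑fun n : ℕ => n.unpair.1
  | right : RecursiveInSet A ↑fun n : ℕ => n.unpair.2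
  | oracle : RecursiveInSet A ↑fun n : ℕ => A.indicator 1 n
  | pair {f g} : RecursiveInSet A f → RecursiveInSet A g →
      RecursiveInSet A fun n => Nat.pair <$> f n <*> g n
  | comp {f g} : RecursiveInSet A f → RecursiveInSet A g →
      RecursiveInSet A fun n => g n >>= f
  | prec {f g} : RecursiveInSet A f → RecursiveInSet A g →
      RecursiveInSet A (Nat.unpaired fun a n =>
        n.rec (f a) fun y IH => do let i ← IH; g (Nat.pair a (Nat.pair y i)))
  | rfind {f} : RecursiveInSet A f →
      RecursiveInSet A fun a => Nat.rfind fun n => (fun m => m = 0) <$> f (Nat.pair a n)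

/-- A total function `f : ℕ → ℕ` is `A`-computable. -/
def ComputableInSet (A : Set ℕ) (f : ℕ → ℕ) : Prop :=
  RecursiveInSet A fun n => Part.some (f n)

/-- A total binary function is `A`-computable. -/
def ComputableInSet₂ (A : Set ℕ) (h : ℕ → ℕ → ℕ) : Prop :=
  ComputableInSet A fun n => h n.unpair.1 n.unpair.2

/-- The characteristic function of a set of naturals. -/
noncomputable def chi (A : Set ℕ) : ℕ → ℕ := A.indicator 1

/-- Turing reducibility: `A ≤_T B`. -/
def TuringLE (A B : Set ℕ) : Prop := ComputableInSet B (chi A)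

/-- `A` is computable. -/
def SetComputable (A : Set ℕ) : Prop := ComputableInSet ∅ (chi A)

/-- `X` is computably enumerable in `A`: `X` is the domain of a partial
`A`-computable function. -/
def CEIn (A : Set ℕ) (X : Set ℕ) : Prop :=
  ∃ p : ℕ →. ℕ, RecursiveInSet A p ∧ X = p.Dom

/-- `A ≤_γ B` (`A` is `(γ,B)`-low): every total `A`-computable function has a
`B`-computable `γ`-lift. -/
def GammaLE (γ : ℕ → ℕ → Prop) (A B : Set ℕ) : Prop :=
  ∀ f : ℕ → ℕ, ComputableInSet A f →
    ∃ g : ℕ → ℕ, ComputableInSet B g ∧ ∀ n, γ (f n) (g n)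

/-- `A` is `γ`-low: `A ≤_γ ∅`. -/
def GammaLow (γ : ℕ → ℕ → Prop) (A : Set ℕ) : Prop := GammaLE γ A ∅

/-- `γ` is `(n, A)`-divisible (for finite `n`). -/
def DivisibleFin (γ : ℕ → ℕ → Prop) (n : ℕ) (A : Set ℕ) : Prop :=
  ∃ (x : Fin n → ℕ) (X : Fin n → Set ℕ),
    (∀ i, CEIn A (X i)) ∧
    (∀ i, {m | γ (x i) m} ⊆ X i) ∧
    (∀ i j, i ≠ j → {m | γ (x i) m} ∩ X j = ∅)

/-- `γ` is `(ω, A)`-divisible. -/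
def DivisibleOmega (γ : ℕ → ℕ → Prop) (A : Set ℕ) : Prop :=
  ∃ (x : ℕ → ℕ) (X : ℕ → Set ℕ),
    ComputableInSet A x ∧
    CEIn A {k : ℕ | k.unpair.2 ∈ X k.unpair.1} ∧
    (∀ i, {m | γ (x i) m} ⊆ X i) ∧
    (∀ i j, i ≠ j → {m | γ (x i) m} ∩ X j = ∅)

/-- `γ` is `A`-precomplete: every partial `A`-computable function has a total
`A`-computable totalization modulo `γ`. -/
def PrecompleteIn (γ : ℕ → ℕ → Prop) (A : Set ℕ) : Prop :=
  ∀ ψ : ℕ →. ℕ, RecursiveInSet A ψ →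
    ∃ f : ℕ → ℕ, ComputableInSet A f ∧ ∀ n, ∀ y ∈ ψ n, γ y (f n)

/-- `γ` is a c.e. numbering. -/
def CENumbering (γ : ℕ → ℕ → Prop) : Prop :=
  CEIn ∅ {k : ℕ | γ k.unpair.1 k.unpair.2}

/-- The `e`-th partial computable function. -/
def phi (e : ℕ) : ℕ →. ℕ := (Denumerable.ofNat Nat.Partrec.Code e).eval

/-- The `e`-th computably enumerable set. -/
def Wset (e : ℕ) : Set ℕ := (phi e).Dom

/-- The halting set `∅'`. -/
def halting : Set ℕ := {e : ℕ | (phi e e).Dom}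

section AuxClosure

theorem RecursiveInSet.of_eq {B : Set ℕ} {f g : ℕ →. ℕ} (hf : RecursiveInSet B f)
    (H : ∀ n, f n = g n) : RecursiveInSet B g := (funext H : f = g) ▸ hf

theorem ComputableInSet.of_eq {B : Set ℕ} {f g : ℕ → ℕ} (hf : ComputableInSet B f)
    (H : ∀ n, f n = g n) : ComputableInSet B g := (funext H : f = g) ▸ hf

theorem recursiveIn_of_partrec {B : Set ℕ} {f : ℕ →. ℕ} (h : Nat.Partrec f) :
    RecursiveInSet B f := by
  induction h with
  | zero => exact .zero
  | succ => exact .succ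
  | left => exact .left
  | right => exact .right
  | pair _ _ ihf ihg => exact .pair ihf ihg
  | comp _ _ ihf ihg => exact .comp ihf ihg
  | prec _ _ ihf ihg => exact .prec ihf ihg
  | rfind _ ih => exact .rfind ih

theorem computableIn_of_computable {B : Set ℕ} {f : ℕ → ℕ} (h : Computable f) :
    ComputableInSet B f :=
  recursiveIn_of_partrec (Partrec.nat_iff.1 h)

theorem chi_computableIn (B : Set ℕ) : ComputableInSet B (chi B) :=
  (RecursiveInSet.oracle).of_eq fun n => by
    by_cases h : n ∈ B <;> simp [chi, Set.indicator, h] <;> rfl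

theorem RecursiveInSet.compTotal {B : Set ℕ} {f : ℕ →. ℕ} {g : ℕ → ℕ}
    (hf : RecursiveInSet B f) (hg : ComputableInSet B g) :
    RecursiveInSet B fun n => f (g n) :=
  (RecursiveInSet.comp hf hg).of_eq fun n => Part.bind_some _ _

theorem ComputableInSet.comp' {B : Set ℕ} {f g : ℕ → ℕ}
    (hf : ComputableInSet B f) (hg : ComputableInSet B g) :
    ComputableInSet B fun n => f (g n) :=
  (RecursiveInSet.comp (f := fun n => Part.some (f n)) hf hg).of_eq fun n => by simp

theorem ComputableInSet.pair' {B : Set ℕ} {f g : ℕ → ℕ}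
    (hf : ComputableInSet B f) (hg : ComputableInSet B g) :
    ComputableInSet B fun n => Nat.pair (f n) (g n) :=
  (RecursiveInSet.pair (f := fun n => Part.some (f n)) (g := fun n => Part.some (g n)) hf hg).of_eq
    fun n => by simp [Seq.seq]

theorem computableIn_comp₂ {B : Set ℕ} {h : ℕ → ℕ → ℕ} (hh : Computable₂ h)
    {f g : ℕ → ℕ} (hf : ComputableInSet B f) (hg : ComputableInSet B g) :
    ComputableInSet B fun n => h (f n) (g n) := by
  have h' : Computable fun k : ℕ => h k.unpair.1 k.unpair.2 :=
    hh.comp (Computable.fst.comp Computable.unpair) (Computable.snd.comp Computable.unpair)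
  exact ((computableIn_of_computable (B := B) h').comp' (hf.pair' hg)).of_eq fun n => by simp

end AuxClosure
section Tab

/-- Encoded table of the first `s` values of the oracle `O`. -/
def tabO (O : ℕ → ℕ) (s : ℕ) : ℕ := Encodable.encode ((List.range s).map O)

theorem tab_computableIn (B : Set ℕ) : ComputableInSet B (tabO (chi B)) := by
  classical
  -- step function for primitive recursion
  have hH : Computable fun p : ℕ × ℕ =>
      Encodable.encode (((Encodable.decode (α := List ℕ) p.1.unpair.2.unpair.2).getD []) ++ [p.2]) := by
    apply Computable.encode.comp
    apply Computable.list_append.comp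
    · exact Computable.option_getD
        (Computable.decode.comp <| Computable.snd.comp <| Computable.unpair.comp <|
          Computable.snd.comp <| Computable.unpair.comp Computable.fst)
        (Computable.const [])
    · exact Computable.list_cons.comp Computable.snd (Computable.const [])
  have hstep : ComputableInSet B fun m : ℕ =>
      Encodable.encode (((Encodable.decode (α := List ℕ) m.unpair.2.unpair.2).getD [])
        ++ [chi B m.unpair.2.unpair.1]) := by
    have hproj : Computable fun m : ℕ => m.unpair.2.unpair.1 :=
      Computable.fst.comp <| Computable.unpair.comp <| Computable.snd.comp Computable.unpair
    exact computableIn_comp₂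
      (h := fun k c => Encodable.encode (((Encodable.decode (α := List ℕ) k.unpair.2.unpair.2).getD []) ++ [c]))
      hH (computableIn_of_computable Computable.id)
      ((chi_computableIn B).comp' (computableIn_of_computable hproj))
  have hbase : RecursiveInSet B (fun _ : ℕ => Part.some (Encodable.encode ([] : List ℕ))) :=
    computableIn_of_computable (Computable.const _)
  have hP := RecursiveInSet.prec (A := B) hbase hstep
  have hQ := hP.compTotal (g := fun s => Nat.pair 0 s)
    (computableIn_of_computable (Primrec₂.natPair.to_comp.comp (Computable.const 0) Computable.id))
  refine hQ.of_eq fun s => ?_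
  simp only [Nat.unpaired, Nat.unpair_pair]
  induction s with
  | zero => simp [tabO]
  | succ s ih =>
      rw [Part.eq_some_iff]
      refine Part.mem_bind_iff.2 ⟨tabO (chi B) s, ?_, ?_⟩
      · rw [ih]; exact Part.mem_some _
      · simp [tabO, Encodable.encodek, List.range_succ]

end Tab
section Approx

/-- `q` approximates `p` relative to finite tables of the oracle `O`. -/
structure OApprox (O : ℕ → ℕ) (p q : ℕ →. ℕ) : Prop where
  sound : ∀ n s y, y ∈ q (Nat.pair n (tabO O s)) → y ∈ p n
  complete : ∀ n y, y ∈ p n → ∃ s, y ∈ q (Nat.pair n (tabO O s))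
  mono : ∀ n s s' y, s ≤ s' → y ∈ q (Nat.pair n (tabO O s)) → y ∈ q (Nat.pair n (tabO O s'))

theorem OApprox.of_eq {O : ℕ → ℕ} {p p' q : ℕ →. ℕ} (h : OApprox O p q)
    (H : ∀ n, p n = p' n) : OApprox O p' q := (funext H : p = p') ▸ h

theorem mem_pair_seq {x y : Part ℕ} {z : ℕ} :
    z ∈ (Nat.pair <$> x <*> y) ↔ ∃ u ∈ x, ∃ v ∈ y, Nat.pair u v = z := by
  simp [Seq.seq, Part.bind_eq_bind, Part.mem_bind_iff, Part.mem_map_iff]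

theorem const_oapprox {O : ℕ → ℕ} {c : ℕ} :
    OApprox O (fun _ => Part.some c) (fun _ => Part.some c) where
  sound _ _ _ h := h
  complete _ _ h := ⟨0, h⟩
  mono _ _ _ _ _ h := h

theorem total_oapprox {O : ℕ → ℕ} (f : ℕ → ℕ) :
    OApprox O (fun n => Part.some (f n)) (fun k => Part.some (f k.unpair.1)) where
  sound n s y h := by simpa using h
  complete n y h := ⟨0, by simpa using h⟩
  mono n s s' y _ h := by simpa using h

/-- The table-approximation of the oracle itself. -/
def qOracle : ℕ →. ℕ := fun k =>
  Part.ofOption ((Encodable.decode (α := List ℕ) k.unpair.2).bind fun l => l[k.unpair.1]?)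

theorem qOracle_mem {O : ℕ → ℕ} {n s y : ℕ} :
    y ∈ qOracle (Nat.pair n (tabO O s)) ↔ n < s ∧ y = O n := by
  have hdec : (Encodable.decode (α := List ℕ) (tabO O s)) =
      Option.some ((List.range s).map O) := Encodable.encodek _
  have hq : qOracle (Nat.pair n (tabO O s)) = Part.ofOption (((List.range s).map O)[n]?) := by
    simp only [qOracle, Nat.unpair_pair, hdec, Option.bind_some]
  rw [hq]
  by_cases h : n < s
  · rw [show ((List.range s).map O)[n]? = Option.some (O n) by
      simp [List.getElem?_map, List.getElem?_range, h]]
    simp [Part.mem_ofOption, h]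
  · rw [show ((List.range s).map O)[n]? = Option.none by
      rw [List.getElem?_eq_none]; simpa using not_lt.1 h]
    simp [Part.mem_ofOption, h]

theorem oracle_oapprox (O : ℕ → ℕ) : OApprox O (fun n => Part.some (O n)) qOracle where
  sound n s y h := by
    rcases qOracle_mem.1 h with ⟨_, rfl⟩; exact Part.mem_some _
  complete n y h := by
    refine ⟨n + 1, qOracle_mem.2 ⟨Nat.lt_succ_self n, ?_⟩⟩
    simpa using h
  mono n s s' y hss h := by
    rcases qOracle_mem.1 h with ⟨hlt, rfl⟩
    exact qOracle_mem.2 ⟨lt_of_lt_of_le hlt hss, rfl⟩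

theorem pair_oapprox {O : ℕ → ℕ} {f g qf qg : ℕ →. ℕ}
    (af : OApprox O f qf) (ag : OApprox O g qg) :
    OApprox O (fun n => Nat.pair <$> f n <*> g n) (fun k => Nat.pair <$> qf k <*> qg k) where
  sound n s y hy := by
    rcases mem_pair_seq.1 hy with ⟨u, hu, v, hv, rfl⟩
    exact mem_pair_seq.2 ⟨u, af.sound _ _ _ hu, v, ag.sound _ _ _ hv, rfl⟩
  complete n y hy := by
    rcases mem_pair_seq.1 hy with ⟨u, hu, v, hv, rfl⟩
    rcases af.complete _ _ hu with ⟨s1, h1⟩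
    rcases ag.complete _ _ hv with ⟨s2, h2⟩
    exact ⟨max s1 s2, mem_pair_seq.2 ⟨u, af.mono _ _ _ _ (le_max_left _ _) h1,
      v, ag.mono _ _ _ _ (le_max_right _ _) h2, rfl⟩⟩
  mono n s s' y hss hy := by
    rcases mem_pair_seq.1 hy with ⟨u, hu, v, hv, rfl⟩
    exact mem_pair_seq.2 ⟨u, af.mono _ _ _ _ hss hu, v, ag.mono _ _ _ _ hss hv, rfl⟩

theorem comp_oapprox {O : ℕ → ℕ} {f g qf qg : ℕ →. ℕ}
    (af : OApprox O f qf) (ag : OApprox O g qg) :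
    OApprox O (fun n => g n >>= f) (fun k => qg k >>= fun u => qf (Nat.pair u k.unpair.2)) where
  sound n s y hy := by
    rw [Part.bind_eq_bind, Part.mem_bind_iff] at hy
    rcases hy with ⟨u, hu, hy⟩
    rw [Nat.unpair_pair] at hy
    refine Part.mem_bind_iff.2 ?_
    exact ⟨u, ag.sound _ _ _ hu, af.sound _ _ _ hy⟩
  complete n y hy := by
    replace hy := Part.mem_bind_iff.1 hy
    rcases hy with ⟨u, hu, hy⟩
    rcases ag.complete _ _ hu with ⟨s1, h1⟩
    rcases af.complete _ _ hy with ⟨s2, h2⟩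
    refine ⟨max s1 s2, ?_⟩
    rw [Part.bind_eq_bind, Part.mem_bind_iff]
    refine ⟨u, ag.mono _ _ _ _ (le_max_left _ _) h1, ?_⟩
    rw [Nat.unpair_pair]
    exact af.mono _ _ _ _ (le_max_right _ _) h2
  mono n s s' y hss hy := by
    rw [Part.bind_eq_bind, Part.mem_bind_iff] at hy
    rcases hy with ⟨u, hu, hy⟩
    rw [Nat.unpair_pair] at hy
    rw [Part.bind_eq_bind, Part.mem_bind_iff]
    refine ⟨u, ag.mono _ _ _ _ hss hu, ?_⟩
    rw [Nat.unpair_pair]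
    exact af.mono _ _ _ _ hss hy

end Approx
section PrecRfind

/-- Course-of-values recursion, real side. -/
def recP (f g : ℕ →. ℕ) (a : ℕ) : ℕ → Part ℕ := fun n =>
  n.rec (f a) fun y IH => IH >>= fun i => g (Nat.pair a (Nat.pair y i))

/-- Course-of-values recursion, table side. -/
def recQ (qf qg : ℕ →. ℕ) (t a : ℕ) : ℕ → Part ℕ := fun n =>
  n.rec (qf (Nat.pair a t)) fun y IH =>
    IH >>= fun i => qg (Nat.pair (Nat.pair a (Nat.pair y i)) t)

theorem recP_succ (f g : ℕ →. ℕ) (a n : ℕ) :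
    recP f g a (n + 1) = recP f g a n >>= fun i => g (Nat.pair a (Nat.pair n i)) := rfl

theorem recQ_succ (qf qg : ℕ →. ℕ) (t a n : ℕ) :
    recQ qf qg t a (n + 1) =
      recQ qf qg t a n >>= fun i => qg (Nat.pair (Nat.pair a (Nat.pair n i)) t) := rfl

theorem recQ_mono {O : ℕ → ℕ} {f g qf qg : ℕ →. ℕ}
    (af : OApprox O f qf) (ag : OApprox O g qg) :
    ∀ (a n s s' : ℕ), s ≤ s' → ∀ y, y ∈ recQ qf qg (tabO O s) a n →
      y ∈ recQ qf qg (tabO O s') a n := by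
  intro a n
  induction n with
  | zero => exact fun s s' hss y hy => af.mono _ _ _ _ hss hy
  | succ n ih =>
      intro s s' hss y hy
      rw [recQ_succ, Part.bind_eq_bind, Part.mem_bind_iff] at hy ⊢
      rcases hy with ⟨i, hi, hy⟩
      exact ⟨i, ih _ _ hss _ hi, ag.mono _ _ _ _ hss hy⟩

theorem recQ_sound {O : ℕ → ℕ} {f g qf qg : ℕ →. ℕ}
    (af : OApprox O f qf) (ag : OApprox O g qg) :
    ∀ (a n s y : ℕ), y ∈ recQ qf qg (tabO O s) a n → y ∈ recP f g a n := by
  intro a n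
  induction n with
  | zero => exact fun s y hy => af.sound _ _ _ hy
  | succ n ih =>
      intro s y hy
      rw [recQ_succ, Part.bind_eq_bind, Part.mem_bind_iff] at hy
      rcases hy with ⟨i, hi, hy⟩
      rw [recP_succ, Part.bind_eq_bind, Part.mem_bind_iff]
      exact ⟨i, ih _ _ hi, ag.sound _ _ _ hy⟩

theorem recQ_complete {O : ℕ → ℕ} {f g qf qg : ℕ →. ℕ}
    (af : OApprox O f qf) (ag : OApprox O g qg) :
    ∀ (a n y : ℕ), y ∈ recP f g a n → ∃ s, y ∈ recQ qf qg (tabO O s) a n := by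
  intro a n
  induction n with
  | zero => exact fun y hy => af.complete _ _ hy
  | succ n ih =>
      intro y hy
      rw [recP_succ, Part.bind_eq_bind, Part.mem_bind_iff] at hy
      rcases hy with ⟨i, hi, hy⟩
      rcases ih _ hi with ⟨s1, h1⟩
      rcases ag.complete _ _ hy with ⟨s2, h2⟩
      refine ⟨max s1 s2, ?_⟩
      rw [recQ_succ, Part.bind_eq_bind, Part.mem_bind_iff]
      exact ⟨i, recQ_mono af ag _ _ _ _ (le_max_left _ _) _ h1,
        ag.mono _ _ _ _ (le_max_right _ _) h2⟩

theorem prec_oapprox {O : ℕ → ℕ} {f g qf qg : ℕ →. ℕ}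
    (af : OApprox O f qf) (ag : OApprox O g qg) :
    OApprox O
      (Nat.unpaired fun a n =>
        n.rec (f a) fun y IH => do let i ← IH; g (Nat.pair a (Nat.pair y i)))
      (fun k => recQ qf qg k.unpair.2 k.unpair.1.unpair.1 k.unpair.1.unpair.2) where
  sound n s y hy := by
    rw [Nat.unpair_pair] at hy
    exact recQ_sound af ag _ _ _ _ hy
  complete n y hy := by
    rcases recQ_complete af ag n.unpair.1 n.unpair.2 y hy with ⟨s, hs⟩
    exact ⟨s, by rw [Nat.unpair_pair]; exact hs⟩
  mono n s s' y hss hy := by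
    rw [Nat.unpair_pair] at hy ⊢
    exact recQ_mono af ag _ _ _ _ hss _ hy

theorem rfind_oapprox {O : ℕ → ℕ} {f qf : ℕ →. ℕ} (af : OApprox O f qf) :
    OApprox O
      (fun a => Nat.rfind fun n => (fun m => m = 0) <$> f (Nat.pair a n))
      (fun k => Nat.rfind fun j =>
        (fun m => m = 0) <$> qf (Nat.pair (Nat.pair k.unpair.1 j) k.unpair.2)) where
  sound a s m hm := by
    replace hm := Nat.mem_rfind.1 hm; refine Nat.mem_rfind.2 ?_
    rcases hm with ⟨htrue, hfalse⟩
    simp only [Nat.unpair_pair, Part.map_eq_map, Part.mem_map_iff] at htrue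
    rcases htrue with ⟨v, hv, hdv⟩
    constructor
    · exact (Part.map_eq_map _ _ ▸ (Part.mem_map_iff _).2 ⟨v, af.sound _ _ _ hv, hdv⟩)
    · intro k hk
      have := hfalse hk
      simp only [Nat.unpair_pair, Part.map_eq_map, Part.mem_map_iff] at this
      rcases this with ⟨w, hw, hdw⟩
      exact (Part.map_eq_map _ _ ▸ (Part.mem_map_iff _).2 ⟨w, af.sound _ _ _ hw, hdw⟩)
  complete a m hm := by
    replace hm := Nat.mem_rfind.1 hm
    rcases hm with ⟨htrue, hfalse⟩
    simp only [Part.map_eq_map, Part.mem_map_iff] at htrue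
    rcases htrue with ⟨v0, hv0, hdv0⟩
    -- for every k ≤ m pick a value and a stage
    have H : ∀ k : Fin (m + 1), ∃ s v, v ∈ f (Nat.pair a k) ∧
        v ∈ qf (Nat.pair (Nat.pair a k) (tabO O s)) := by
      intro k
      rcases Nat.lt_succ_iff_lt_or_eq.1 k.isLt with hk | hk
      · have := hfalse hk
        simp only [Part.map_eq_map, Part.mem_map_iff] at this
        rcases this with ⟨w, hw, _⟩
        rcases af.complete _ _ hw with ⟨s, hs⟩
        exact ⟨s, w, hw, hs⟩
      · rcases af.complete _ _ hv0 with ⟨s, hs⟩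
        exact ⟨s, v0, by rw [hk]; exact hv0, by rw [hk]; exact hs⟩
    choose sfun vfun hvf hvq using H
    set N := (Finset.univ : Finset (Fin (m + 1))).sup sfun with hN
    have hNle : ∀ k : Fin (m + 1), sfun k ≤ N := fun k =>
      Finset.le_sup (Finset.mem_univ k)
    refine ⟨N, ?_⟩
    refine Nat.mem_rfind.2 ?_
    constructor
    · simp only [Nat.unpair_pair, Part.map_eq_map, Part.mem_map_iff]
      refine ⟨vfun ⟨m, Nat.lt_succ_self m⟩,
        af.mono _ _ _ _ (hNle _) (hvq ⟨m, Nat.lt_succ_self m⟩), ?_⟩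
      have : vfun ⟨m, Nat.lt_succ_self m⟩ = v0 :=
        Part.mem_unique (hvf ⟨m, Nat.lt_succ_self m⟩) hv0
      rw [this, hdv0]
    · intro k hk
      simp only [Nat.unpair_pair, Part.map_eq_map, Part.mem_map_iff]
      have hk' : k < m + 1 := Nat.lt_succ_of_lt hk
      refine ⟨vfun ⟨k, hk'⟩, af.mono _ _ _ _ (hNle _) (hvq ⟨k, hk'⟩), ?_⟩
      have := hfalse hk
      simp only [Part.map_eq_map, Part.mem_map_iff] at this
      rcases this with ⟨w, hw, hdw⟩
      have : vfun ⟨k, hk'⟩ = w := Part.mem_unique (hvf ⟨k, hk'⟩) hw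
      rw [this, hdw]
  mono a s s' m hss hm := by
    replace hm := Nat.mem_rfind.1 hm; refine Nat.mem_rfind.2 ?_
    rcases hm with ⟨htrue, hfalse⟩
    simp only [Nat.unpair_pair, Part.map_eq_map, Part.mem_map_iff] at htrue
    rcases htrue with ⟨v, hv, hdv⟩
    constructor
    · simp only [Nat.unpair_pair, Part.map_eq_map, Part.mem_map_iff]
      exact ⟨v, af.mono _ _ _ _ hss hv, hdv⟩
    · intro k hk
      have := hfalse hk
      simp only [Nat.unpair_pair, Part.map_eq_map, Part.mem_map_iff] at this
      rcases this with ⟨w, hw, hdw⟩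
      simp only [Nat.unpair_pair, Part.map_eq_map, Part.mem_map_iff]
      exact ⟨w, af.mono _ _ _ _ hss hw, hdw⟩

end PrecRfind
section ExistsApprox

private theorem comp_u1 : Computable fun k : ℕ => k.unpair.1 :=
  Computable.fst.comp Computable.unpair

private theorem comp_u2 : Computable fun k : ℕ => k.unpair.2 :=
  Computable.snd.comp Computable.unpair

theorem exists_oapprox {B : Set ℕ} {p : ℕ →. ℕ} (h : RecursiveInSet B p) :
    ∃ q : ℕ →. ℕ, Nat.Partrec q ∧ OApprox (chi B) p q := by
  induction h with
  | zero =>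
      exact ⟨pure 0, Nat.Partrec.zero, const_oapprox⟩
  | succ =>
      refine ⟨fun k => Part.some (k.unpair.1.succ), ?_, ?_⟩
      · exact Partrec.nat_iff.1 (Computable.succ.comp comp_u1)
      · exact (total_oapprox Nat.succ).of_eq fun n => rfl
  | left =>
      refine ⟨fun k => Part.some (k.unpair.1.unpair.1), ?_, ?_⟩
      · exact Partrec.nat_iff.1 (comp_u1.comp comp_u1)
      · exact (total_oapprox fun n => n.unpair.1).of_eq fun n => rfl
  | right =>
      refine ⟨fun k => Part.some (k.unpair.1.unpair.2), ?_, ?_⟩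
      · exact Partrec.nat_iff.1 (comp_u2.comp comp_u1)
      · exact (total_oapprox fun n => n.unpair.2).of_eq fun n => rfl
  | oracle =>
      refine ⟨qOracle, ?_, ?_⟩
      · refine Partrec.nat_iff.1 (Computable.ofOption ?_)
        exact Computable.option_bind (Computable.decode.comp comp_u2)
          (Computable.list_getElem?.comp Computable.snd (comp_u1.comp Computable.fst))
      · exact (oracle_oapprox (chi B)).of_eq fun n => by
          by_cases h : n ∈ B <;> simp [chi, Set.indicator, h] <;> rfl
  | pair hf hg ihf ihg =>
      rcases ihf with ⟨qf, pf, af⟩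
      rcases ihg with ⟨qg, pg, ag⟩
      exact ⟨_, Nat.Partrec.pair pf pg, pair_oapprox af ag⟩
  | comp hf hg ihf ihg =>
      rcases ihf with ⟨qf, pf, af⟩
      rcases ihg with ⟨qg, pg, ag⟩
      refine ⟨fun k => qg k >>= fun u => qf (Nat.pair u k.unpair.2), ?_, comp_oapprox af ag⟩
      refine Partrec.nat_iff.1 ((Partrec.nat_iff.2 pg).bind ?_)
      exact (Partrec.nat_iff.2 pf).comp
        (Primrec₂.natPair.to_comp.comp Computable.snd ((comp_u2).comp Computable.fst))
  | prec hf hg ihf ihg =>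
      rcases ihf with ⟨qf, pf, af⟩
      rcases ihg with ⟨qg, pg, ag⟩
      refine ⟨fun k => recQ qf qg k.unpair.2 k.unpair.1.unpair.1 k.unpair.1.unpair.2, ?_,
        prec_oapprox af ag⟩
      have hre : Computable fun m : ℕ =>
          Nat.pair (Nat.pair m.unpair.1.unpair.1 m.unpair.2) m.unpair.1.unpair.2 :=
        Primrec₂.natPair.to_comp.comp
          (Primrec₂.natPair.to_comp.comp (comp_u1.comp comp_u1) comp_u2)
          (comp_u2.comp comp_u1)
      have hg' : Nat.Partrec fun m : ℕ =>
          qg (Nat.pair (Nat.pair m.unpair.1.unpair.1 m.unpair.2) m.unpair.1.unpair.2) :=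
        Partrec.nat_iff.1 ((Partrec.nat_iff.2 pg).comp hre)
      have hinner := Nat.Partrec.prec pf hg'
      have hq := Partrec.nat_iff.1 ((Partrec.nat_iff.2 hinner).comp hre)
      refine hq.of_eq fun k => ?_
      simp only [Nat.unpaired, Nat.unpair_pair]
      -- now prove the rec expressions agree, by induction on the rec argument
      generalize k.unpair.1.unpair.1 = a
      generalize k.unpair.1.unpair.2 = n
      generalize k.unpair.2 = t
      have bind_congr' : ∀ (x y : Part ℕ) (F G : ℕ → Part ℕ), x = y → (∀ i, F i = G i) →
          x >>= F = y >>= G := by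
        intro x y F G h1 h2; rw [h1]; exact congrArg _ (funext h2)
      induction n with
      | zero => rfl
      | succ n ih =>
          exact bind_congr' _ _ _ _ ih fun i => by simp [Nat.unpair_pair]
  | rfind hf ihf =>
      rcases ihf with ⟨qf, pf, af⟩
      refine ⟨fun k => Nat.rfind fun j =>
        (fun m => m = 0) <$> qf (Nat.pair (Nat.pair k.unpair.1 j) k.unpair.2), ?_,
        rfind_oapprox af⟩
      have harg : Computable fun pr : ℕ × ℕ =>
          Nat.pair (Nat.pair pr.1.unpair.1 pr.2) pr.1.unpair.2 :=
        Primrec₂.natPair.to_comp.comp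
          (Primrec₂.natPair.to_comp.comp (comp_u1.comp Computable.fst) Computable.snd)
          (comp_u2.comp Computable.fst)
      have hdec : Computable₂ fun (_ : ℕ × ℕ) (m : ℕ) => decide (m = 0) :=
        ((Primrec.eq.comp Primrec.snd (Primrec.const 0)).decide.to_comp).to₂
      have hp2 : Partrec₂ fun (k j : ℕ) =>
          (fun m => decide (m = 0)) <$> qf (Nat.pair (Nat.pair k.unpair.1 j) k.unpair.2) :=
        ((Partrec.nat_iff.2 pf).comp harg).map hdec
      exact Partrec.nat_iff.1 (Partrec.rfind hp2)

end ExistsApprox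
section Post

private theorem pu1 : Primrec fun k : ℕ => k.unpair.1 := Primrec.fst.comp Primrec.unpair
private theorem pu2 : Primrec fun k : ℕ => k.unpair.2 := Primrec.snd.comp Primrec.unpair

/-- Dovetailing test function: given `x = ⟨n, s, t⟩`, check whether either code halts
on input `⟨n, tab s⟩` within `t` steps. -/
def dovet (cp cq : Nat.Partrec.Code) (O : ℕ → ℕ) (x : ℕ) : ℕ :=
  bif (Nat.Partrec.Code.evaln x.unpair.2.unpair.2 cp
      (Nat.pair x.unpair.1 (tabO O x.unpair.2.unpair.1))).isSome then 0
  else bif (Nat.Partrec.Code.evaln x.unpair.2.unpair.2 cq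
      (Nat.pair x.unpair.1 (tabO O x.unpair.2.unpair.1))).isSome then 0 else 1

/-- Output function: `1` if the first code halted, `0` otherwise. -/
def outv (cp : Nat.Partrec.Code) (O : ℕ → ℕ) (y : ℕ) : ℕ :=
  bif (Nat.Partrec.Code.evaln y.unpair.2.unpair.2 cp
      (Nat.pair y.unpair.1 (tabO O y.unpair.2.unpair.1))).isSome then 1 else 0

private theorem evaln_isSome_prim (c : Nat.Partrec.Code) :
    Primrec fun pr : ℕ × ℕ =>
      (Nat.Partrec.Code.evaln pr.1.unpair.2.unpair.2 c (Nat.pair pr.1.unpair.1 pr.2)).isSome :=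
  Primrec.option_isSome.comp <|
    Nat.Partrec.Code.primrec_evaln.comp <|
      Primrec.pair
        (Primrec.pair ((pu2.comp pu2).comp Primrec.fst) (Primrec.const c))
        (Primrec₂.natPair.comp (pu1.comp Primrec.fst) Primrec.snd)

private theorem hproj_comp : Computable fun x : ℕ => x.unpair.2.unpair.1 :=
  (pu1.comp pu2).to_comp

theorem dovet_computableIn (cp cq : Nat.Partrec.Code) (B : Set ℕ) :
    ComputableInSet B (dovet cp cq (chi B)) := by
  have hG : Computable₂ fun (x t : ℕ) =>
      bif (Nat.Partrec.Code.evaln x.unpair.2.unpair.2 cp (Nat.pair x.unpair.1 t)).isSome then 0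
      else bif (Nat.Partrec.Code.evaln x.unpair.2.unpair.2 cq
        (Nat.pair x.unpair.1 t)).isSome then 0 else (1:ℕ) :=
    (Primrec.cond (evaln_isSome_prim cp)
      (Primrec.const 0)
      (Primrec.cond (evaln_isSome_prim cq) (Primrec.const 0) (Primrec.const 1))).to_comp.to₂
  exact (computableIn_comp₂ hG (computableIn_of_computable Computable.id)
    ((tab_computableIn B).comp' (computableIn_of_computable hproj_comp))).of_eq fun x => rfl

theorem outv_computableIn (cp : Nat.Partrec.Code) (B : Set ℕ) :
    ComputableInSet B (outv cp (chi B)) := by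
  have hG : Computable₂ fun (x t : ℕ) =>
      bif (Nat.Partrec.Code.evaln x.unpair.2.unpair.2 cp (Nat.pair x.unpair.1 t)).isSome
      then 1 else (0:ℕ) :=
    (Primrec.cond (evaln_isSome_prim cp) (Primrec.const 1) (Primrec.const 0)).to_comp.to₂
  exact (computableIn_comp₂ hG (computableIn_of_computable Computable.id)
    ((tab_computableIn B).comp' (computableIn_of_computable hproj_comp))).of_eq fun x => rfl

theorem turingLE_of_ceIn_ceIn {A B : Set ℕ} (h1 : CEIn B A) (h2 : CEIn B Aᶜ) :
    TuringLE A B := by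
  classical
  obtain ⟨p, hp, hpA⟩ := h1
  obtain ⟨q, hq, hqA⟩ := h2
  obtain ⟨p', hp', ap⟩ := exists_oapprox hp
  obtain ⟨q', hq', aq⟩ := exists_oapprox hq
  obtain ⟨cp, hcp⟩ := Nat.Partrec.Code.exists_code.1 hp'
  obtain ⟨cq, hcq⟩ := Nat.Partrec.Code.exists_code.1 hq'
  set O := chi B with hO
  -- the search is B-computable
  have hrfind : RecursiveInSet B fun a =>
      Nat.rfind fun j => (fun m => m = 0) <$>
        Part.some (dovet cp cq O (Nat.pair a j)) :=
    RecursiveInSet.rfind (dovet_computableIn cp cq B)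
  have hpair : RecursiveInSet B fun n =>
      Nat.pair <$> Part.some n <*> (Nat.rfind fun j => (fun m => m = 0) <$>
        Part.some (dovet cp cq O (Nat.pair n j))) :=
    RecursiveInSet.pair (computableIn_of_computable Computable.id) hrfind
  have hF : RecursiveInSet B fun n =>
      (Nat.pair <$> Part.some n <*> (Nat.rfind fun j => (fun m => m = 0) <$>
        Part.some (dovet cp cq O (Nat.pair n j)))) >>= fun y =>
          Part.some (outv cp O y) :=
    RecursiveInSet.comp (outv_computableIn cp B) hpair
  refine hF.of_eq fun n => ?_
  -- sound transfer: if evaln halts on a true table, the real function halts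
  have soundP : ∀ s t v, Nat.Partrec.Code.evaln t cp (Nat.pair n (tabO O s)) = Option.some v →
      n ∈ A := by
    intro s t v hv
    have : v ∈ p' (Nat.pair n (tabO O s)) := by
      rw [← hcp]
      exact Nat.Partrec.Code.evaln_complete.2 ⟨t, hv⟩
    have : v ∈ p n := ap.sound _ _ _ this
    rw [hpA]
    exact (PFun.mem_dom _ _).2 ⟨v, this⟩
  have soundQ : ∀ s t v, Nat.Partrec.Code.evaln t cq (Nat.pair n (tabO O s)) = Option.some v →
      n ∉ A := by
    intro s t v hv
    have : v ∈ q' (Nat.pair n (tabO O s)) := by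
      rw [← hcq]
      exact Nat.Partrec.Code.evaln_complete.2 ⟨t, hv⟩
    have : v ∈ q n := aq.sound _ _ _ this
    have : n ∈ Aᶜ := by rw [hqA]; exact (PFun.mem_dom _ _).2 ⟨v, this⟩
    exact this
  -- existence of a successful search point
  have hex : ∃ j, dovet cp cq O (Nat.pair n j) = 0 := by
    by_cases hn : n ∈ A
    · have : ∃ v, v ∈ p n := (PFun.mem_dom _ _).1 (hpA ▸ hn)
      obtain ⟨v, hv⟩ := this
      obtain ⟨s, hs⟩ := ap.complete _ _ hv
      have : v ∈ (cp.eval) (Nat.pair n (tabO O s)) := by rw [hcp]; exact hs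
      obtain ⟨t, ht⟩ := Nat.Partrec.Code.evaln_complete.1 this
      refine ⟨Nat.pair s t, ?_⟩
      have hsome : (Nat.Partrec.Code.evaln t cp (Nat.pair n (tabO O s))).isSome :=
        Option.isSome_iff_exists.2 ⟨v, ht⟩
      simp [dovet, Nat.unpair_pair, hsome]
    · have : ∃ v, v ∈ q n := (PFun.mem_dom _ _).1 (hqA ▸ (hn : n ∈ Aᶜ))
      obtain ⟨v, hv⟩ := this
      obtain ⟨s, hs⟩ := aq.complete _ _ hv
      have : v ∈ (cq.eval) (Nat.pair n (tabO O s)) := by rw [hcq]; exact hs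
      obtain ⟨t, ht⟩ := Nat.Partrec.Code.evaln_complete.1 this
      refine ⟨Nat.pair s t, ?_⟩
      have hsome : (Nat.Partrec.Code.evaln t cq (Nat.pair n (tabO O s))).isSome :=
        Option.isSome_iff_exists.2 ⟨v, ht⟩
      cases hsomeP : (Nat.Partrec.Code.evaln t cp
          (Nat.pair n (tabO O s))).isSome <;>
        simp [dovet, Nat.unpair_pair, hsome, hsomeP]
  -- rewrite the rfind over a total boolean function
  have hEq : (fun j => (fun m => decide (m = 0)) <$> Part.some (dovet cp cq O (Nat.pair n j))
        : ℕ →. Bool) =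
      ((fun j => decide (dovet cp cq O (Nat.pair n j) = 0) : ℕ → Bool) : ℕ →. Bool) :=
    funext fun j => rfl
  obtain ⟨j, hex⟩ := hex
  have hpm : (fun j => decide (dovet cp cq O (Nat.pair n j) = 0)) j = true :=
    decide_eq_true hex
  obtain ⟨j₀, hj₀, -⟩ :=
    Nat.rfind_min' (p := fun j => decide (dovet cp cq O (Nat.pair n j) = 0)) hpm
  -- the search succeeds with value j₀
  have hj₀' : j₀ ∈ Nat.rfind fun j => (fun m => m = 0) <$>
      Part.some (dovet cp cq O (Nat.pair n j)) := by rw [hEq]; exact hj₀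
  have hcond : dovet cp cq O (Nat.pair n j₀) = 0 := by
    have := Nat.rfind_spec hj₀
    simp only [PFun.coe_val, Part.mem_some_iff] at this
    exact of_decide_eq_true this.symm
  rw [Part.eq_some_iff]
  rw [Part.bind_eq_bind, Part.mem_bind_iff]
  refine ⟨Nat.pair n j₀, mem_pair_seq.2 ⟨n, Part.mem_some n, j₀, hj₀', rfl⟩, ?_⟩
  rw [Part.mem_some_iff]
  -- analyze which side halted
  rcases hP : (Nat.Partrec.Code.evaln j₀.unpair.2 cp
      (Nat.pair n (tabO O j₀.unpair.1))).isSome with hP' | hP'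
  · -- cp did not halt, so cq halted and n ∉ A
    have hQsome : (Nat.Partrec.Code.evaln j₀.unpair.2 cq
        (Nat.pair n (tabO O j₀.unpair.1))).isSome := by
      by_contra hQ
      rw [Bool.not_eq_true] at hQ
      simp [dovet, Nat.unpair_pair, hP, hQ] at hcond
    obtain ⟨v, hv⟩ := Option.isSome_iff_exists.1 hQsome
    have hnA : n ∉ A := soundQ _ _ _ hv
    have : chi A n = 0 := by simp [chi, Set.indicator, hnA]
    rw [this]
    simp [outv, Nat.unpair_pair, hP]
  · obtain ⟨v, hv⟩ := Option.isSome_iff_exists.1 hP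
    have hnA : n ∈ A := soundP _ _ _ hv
    have : chi A n = 1 := by simp [chi, Set.indicator, hnA]
    rw [this]
    simp [outv, Nat.unpair_pair, hP]

end Post
/-- If `A ≤_γ B` and `γ` is `(2, B)`-divisible, then `A ≤_T B`. -/
theorem turingLE_of_gammaLE_of_divisible (γ : ℕ → ℕ → Prop) (hγ : Equivalence γ)
    (A B : Set ℕ) (h : GammaLE γ A B) (hdiv : DivisibleFin γ 2 B) :
    TuringLE A B := by
  classical
  obtain ⟨x, X, hce, hsub, hdisj⟩ := hdiv
  -- the function n ↦ x_{χ_A n} is A-computable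
  have hFc : Computable fun k : ℕ => if k = 0 then x 0 else x 1 :=
    (Primrec.ite (Primrec.eq.comp Primrec.id (Primrec.const 0))
      (Primrec.const (x 0)) (Primrec.const (x 1))).to_comp
  have hf : ComputableInSet A fun n => if chi A n = 0 then x 0 else x 1 :=
    (computableIn_of_computable hFc).comp' (chi_computableIn A)
  obtain ⟨g, hg, hγg⟩ := h _ hf
  have hval1 : ∀ n, n ∈ A → γ (x 1) (g n) := by
    intro n hn
    have hc : chi A n = 1 := by simp [chi, Set.indicator, hn]
    have := hγg n
    rw [hc] at this
    simpa using this
  have hval0 : ∀ n, n ∉ A → γ (x 0) (g n) := by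
    intro n hn
    have hc : chi A n = 0 := by simp [chi, Set.indicator, hn]
    have := hγg n
    rw [hc] at this
    simpa using this
  have hA1 : A = {n | g n ∈ X 1} := by
    ext n
    constructor
    · intro hn
      exact hsub 1 (hval1 n hn)
    · intro hn
      by_contra hnA
      have : g n ∈ {m | γ (x 0) m} ∩ X 1 := ⟨hval0 n hnA, hn⟩
      rw [hdisj 0 1 (by decide)] at this
      exact this
  have hA0 : Aᶜ = {n | g n ∈ X 0} := by
    ext n
    constructor
    · intro hn
      exact hsub 0 (hval0 n hn)
    · intro hn
      intro hnA
      have : g n ∈ {m | γ (x 1) m} ∩ X 0 := ⟨hval1 n hnA, hn⟩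
      rw [hdisj 1 0 (by decide)] at this
      exact this
  obtain ⟨p1, hp1, hX1⟩ := hce 1
  obtain ⟨p0, hp0, hX0⟩ := hce 0
  have hceA : CEIn B A := by
    refine ⟨fun n => p1 (g n), hp1.compTotal hg, ?_⟩
    ext n
    rw [hA1]
    show g n ∈ X 1 ↔ _
    rw [hX1]
    exact Iff.rfl
  have hceAc : CEIn B Aᶜ := by
    refine ⟨fun n => p0 (g n), hp0.compTotal hg, ?_⟩
    ext n
    rw [hA0]
    show g n ∈ X 0 ↔ _
    rw [hX0]
    exact Iff.rfl
  exact turingLE_of_ceIn_ceIn hceA hceAc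
end

section
/- There exists a c.e. numbering γ (i.e. a computably enumerable equivalence relation on ℕ) with infinitely many equivalence classes that is not ω-divisible, i.e. not (ω, ∅)-divisible. -/
open Nat Part

section NotOmegaDivSection
open Nat.Partrec.Code

namespace NotOmegaDivAux

/-- approximation predicate: `n` codes a pair `(m, s)` with `2e < m` and
`m ∈ W_e` within `s` steps. -/
def DB (e n : ℕ) : Bool :=
  decide (2 * e < n.unpair.1) &&
    (evaln n.unpair.2 (Denumerable.ofNat Nat.Partrec.Code e) n.unpair.1).isSome

theorem DB_prim : Primrec₂ DB := by
  have h1 : PrimrecRel fun (e n : ℕ) => 2 * e < n.unpair.1 :=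
    Primrec.nat_lt.comp (Primrec.nat_double.comp Primrec.fst)
      ((Primrec.fst.comp Primrec.unpair).comp Primrec.snd)
  have h2 : Primrec₂ fun (e n : ℕ) =>
      (evaln n.unpair.2 (Denumerable.ofNat Nat.Partrec.Code e) n.unpair.1).isSome := by
    apply Primrec.option_isSome.comp
    exact primrec_evaln.comp <|
      (((Primrec.snd.comp Primrec.unpair).comp Primrec.snd).pair
        ((Primrec.ofNat _).comp Primrec.fst)).pair
        ((Primrec.fst.comp Primrec.unpair).comp Primrec.snd)
  exact Primrec.and.comp₂ h1.decide h2

end NotOmegaDivAux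

namespace NotOmegaDivAux

open scoped Classical

/-- bounded "for all k < n, f k = false" -/
def ballNot (f : ℕ → Bool) (n : ℕ) : Bool :=
  Nat.rec true (fun k ih => ih && !f k) n

theorem ballNot_iff (f : ℕ → Bool) (n : ℕ) :
    ballNot f n = true ↔ ∀ k < n, f k = false := by
  induction n with
  | zero => simp [ballNot]
  | succ n ih =>
    simp only [ballNot] at ih ⊢
    simp [Bool.and_eq_true, ih, Nat.lt_succ_iff_lt_or_eq]
    constructor
    · rintro ⟨h1, h2⟩ k hk
      rcases Nat.lt_or_eq_of_le hk with hk | rfl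
      · exact h1 k hk
      · simpa using h2
    · rintro h
      exact ⟨fun k hk => h k hk.le, by simp [h n le_rfl]⟩

/-- bounded "exists k < n, f k = true" -/
def bany (f : ℕ → Bool) (n : ℕ) : Bool :=
  Nat.rec false (fun k ih => ih || f k) n

theorem bany_iff (f : ℕ → Bool) (n : ℕ) :
    bany f n = true ↔ ∃ k < n, f k = true := by
  induction n with
  | zero => simp [bany]
  | succ n ih =>
    simp only [bany] at ih ⊢
    simp only [Bool.or_eq_true, ih]
    constructor
    · rintro (⟨k, hk, h⟩ | h)
      · exact ⟨k, hk.trans (Nat.lt_succ_self n), h⟩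
      · exact ⟨n, Nat.lt_succ_self n, h⟩
    · rintro ⟨k, hk, h⟩
      rcases Nat.lt_succ_iff_lt_or_eq.1 hk with hk | rfl
      · exact Or.inl ⟨k, hk, h⟩
      · exact Or.inr h

theorem bany_mono {f : ℕ → Bool} {n n' : ℕ} (h : n ≤ n') (hf : bany f n = true) :
    bany f n' = true := by
  rw [bany_iff] at hf ⊢
  obtain ⟨k, hk, hfk⟩ := hf
  exact ⟨k, hk.trans_le h, hfk⟩

theorem ballNot_prim {f : α → ℕ → Bool} [Primcodable α] (hf : Primrec₂ f) :
    Primrec₂ fun a n => ballNot (f a) n := by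
  have := Primrec.nat_rec (f := fun _ : α => true)
    (g := fun a (p : ℕ × Bool) => p.2 && !f a p.1) (Primrec.const true)
    (Primrec.and.comp₂ (Primrec.snd.comp Primrec.snd)
      (Primrec.not.comp (hf.comp Primrec.fst (Primrec.fst.comp Primrec.snd))))
  exact this.of_eq fun a n => rfl

theorem bany_prim {f : α → ℕ → Bool} [Primcodable α] (hf : Primrec₂ f) :
    Primrec₂ fun a n => bany (f a) n := by
  have := Primrec.nat_rec (f := fun _ : α => false)
    (g := fun a (p : ℕ × Bool) => p.2 || f a p.1) (Primrec.const false)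
    (Primrec.or.comp₂ (Primrec.snd.comp Primrec.snd)
      (hf.comp Primrec.fst (Primrec.fst.comp Primrec.snd)))
  exact this.of_eq fun a n => rfl

end NotOmegaDivAux

namespace NotOmegaDivAux

open scoped Classical in
/-- Post's witness function: the least coded pair `(m,s)` with `2e < m` and
`m ∈ W_e` in `s` steps; output `m`. -/
noncomputable def Sw (e : ℕ) : Option ℕ :=
  if h : ∃ n, DB e n = true then Option.some (Nat.find h).unpair.1 else Option.none

/-- Post's simple set. -/
def Spost : Set ℕ := {m | ∃ e, Sw e = Option.some m}

/-- `wB2 m p = true` iff `p = pair e n` where `n` is the least `DB e`-witness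
and yields `m`. -/
def wB2 (m p : ℕ) : Bool :=
  DB p.unpair.1 p.unpair.2 && ballNot (DB p.unpair.1) p.unpair.2 &&
    (p.unpair.2.unpair.1 == m)

theorem wB2_prim : Primrec₂ wB2 := by
  have h1 : Primrec₂ fun (m p : ℕ) => DB p.unpair.1 p.unpair.2 :=
    DB_prim.comp ((Primrec.fst.comp Primrec.unpair).comp Primrec.snd)
      ((Primrec.snd.comp Primrec.unpair).comp Primrec.snd)
  have h2 : Primrec₂ fun (m p : ℕ) => ballNot (DB p.unpair.1) p.unpair.2 := by
    have := ballNot_prim DB_prim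
    exact this.comp ((Primrec.fst.comp Primrec.unpair).comp Primrec.snd)
      ((Primrec.snd.comp Primrec.unpair).comp Primrec.snd)
  have h3 : Primrec₂ fun (m p : ℕ) => (p.unpair.2.unpair.1 == m) :=
    Primrec.beq.comp
      (Primrec.fst.comp <| Primrec.unpair.comp <|
        (Primrec.snd.comp Primrec.unpair).comp Primrec.snd) Primrec.fst
  exact Primrec.and.comp₂ (Primrec.and.comp₂ h1 h2) h3

theorem Sw_eq_some_iff {e m : ℕ} :
    Sw e = Option.some m ↔ ∃ n, (DB e n && ballNot (DB e) n && (n.unpair.1 == m)) = true := by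
  classical
  constructor
  · intro h
    rw [Sw] at h
    split_ifs at h with hex
    · obtain rfl : (Nat.find hex).unpair.1 = m := by simpa using h
      refine ⟨Nat.find hex, ?_⟩
      simp only [Bool.and_eq_true, beq_iff_eq]
      refine ⟨⟨Nat.find_spec hex, ?_⟩, trivial⟩
      rw [ballNot_iff]
      intro k hk
      simpa using Nat.find_min hex hk
  · rintro ⟨n, hn⟩
    simp only [Bool.and_eq_true, beq_iff_eq] at hn
    obtain ⟨⟨hDB, hball⟩, hm⟩ := hn
    have hex : ∃ n, DB e n = true := ⟨n, hDB⟩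
    have hfind : Nat.find hex = n := by
      rw [ballNot_iff] at hball
      refine le_antisymm (Nat.find_min' hex hDB) (le_of_not_gt fun hlt => ?_)
      have h1 := hball _ hlt
      have h2 := Nat.find_spec hex
      rw [h1] at h2
      cases h2
    rw [Sw, dif_pos hex, hfind, hm]

theorem mem_Spost_iff {m : ℕ} : m ∈ Spost ↔ ∃ p, wB2 m p = true := by
  constructor
  · rintro ⟨e, he⟩
    rw [Sw_eq_some_iff] at he
    obtain ⟨n, hn⟩ := he
    exact ⟨Nat.pair e n, by simpa [wB2, Nat.unpair_pair] using hn⟩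
  · rintro ⟨p, hp⟩
    refine ⟨p.unpair.1, ?_⟩
    rw [Sw_eq_some_iff]
    exact ⟨p.unpair.2, hp⟩

end NotOmegaDivAux

namespace NotOmegaDivAux

open scoped Classical

theorem Sw_gt {e m : ℕ} (h : Sw e = Option.some m) : 2 * e < m := by
  rw [Sw_eq_some_iff] at h
  obtain ⟨n, hn⟩ := h
  simp only [Bool.and_eq_true, beq_iff_eq, DB] at hn
  obtain ⟨⟨⟨hlt, _⟩, _⟩, hm⟩ := hn
  simp only [decide_eq_true_eq] at hlt
  omega

theorem card_S_filter_le (N : ℕ) :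
    ((Finset.range (2 * N + 1)).filter (· ∈ Spost)).card ≤ N := by
  classical
  have hsub : (Finset.range (2 * N + 1)).filter (· ∈ Spost) ⊆
      (Finset.range N).image (fun e => (Sw e).getD 0) := by
    intro m hm
    simp only [Finset.mem_filter, Finset.mem_range] at hm
    obtain ⟨hmlt, e, he⟩ := hm
    have h2e : 2 * e < m := Sw_gt he
    refine Finset.mem_image.2 ⟨e, Finset.mem_range.2 (by omega), by simp [he]⟩
  calc ((Finset.range (2 * N + 1)).filter (· ∈ Spost)).card
      ≤ ((Finset.range N).image (fun e => (Sw e).getD 0)).card :=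
        Finset.card_le_card hsub
    _ ≤ N := (Finset.card_image_le).trans (by simp)

theorem Spost_compl_infinite : {m : ℕ | m ∉ Spost}.Infinite := by
  classical
  by_contra hfin
  rw [Set.not_infinite] at hfin
  set N := hfin.toFinset.card with hN
  have hsub : (Finset.range (2 * N + 1)).filter (· ∉ Spost) ⊆ hfin.toFinset := by
    intro m hm
    simp only [Finset.mem_filter] at hm
    simp [Set.Finite.mem_toFinset, hm.2]
  have hcard : ((Finset.range (2 * N + 1)).filter (· ∉ Spost)).card ≤ N :=
    (Finset.card_le_card hsub).trans (le_of_eq hN.symm)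
  have htot := Finset.card_filter_add_card_filter_not
    (s := Finset.range (2 * N + 1)) (p := (· ∈ Spost))
  have := card_S_filter_le N
  simp only [Finset.card_range] at htot
  omega

set_option maxHeartbeats 1000000 in
/-- Simplicity: `Spost` meets the domain of every `Partrec` function with
infinite domain. -/
theorem Spost_simple {p : ℕ →. ℕ} (hp : _root_.Partrec p) (hinf : p.Dom.Infinite) :
    ∃ m, m ∈ Spost ∧ m ∈ p.Dom := by
  have hnp : Nat.Partrec p := Partrec.nat_iff.1 hp
  obtain ⟨c, hc⟩ := exists_code.1 hnp
  set e := Encodable.encode c with he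
  obtain ⟨m, hm, hmgt⟩ := hinf.exists_gt (2 * e)
  -- m ∈ p.Dom, so evaln eventually halts
  have hdom : (eval c m).Dom := by rw [hc]; exact hm
  obtain ⟨y, hy⟩ := Part.dom_iff_mem.1 hdom
  obtain ⟨k, hk⟩ := evaln_complete.1 hy
  have hDB : DB e (Nat.pair m k) = true := by
    simp only [DB, Nat.unpair_pair, Bool.and_eq_true, decide_eq_true_eq]
    constructor
    · exact hmgt
    · rw [he, Denumerable.ofNat_encode]
      exact Option.isSome_iff_exists.2 ⟨y, hk⟩
  have hex : ∃ n, DB e n = true := ⟨Nat.pair m k, hDB⟩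
  have hfind0 : DB e (Nat.find hex) = true := Nat.find_spec hex
  obtain ⟨n₀, hn₀⟩ : ∃ n₀, Nat.find hex = n₀ := ⟨_, rfl⟩
  rw [hn₀] at hfind0
  have hS : n₀.unpair.1 ∈ Spost := by
    refine ⟨e, Sw_eq_some_iff.2 ⟨n₀, ?_⟩⟩
    simp only [Bool.and_eq_true, beq_iff_eq]
    refine ⟨⟨hfind0, ?_⟩, by simp⟩
    rw [ballNot_iff]
    intro j hj
    simpa using Nat.find_min hex (hn₀ ▸ hj)
  have hco : Denumerable.ofNat Nat.Partrec.Code e = c := by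
    rw [he]; exact Denumerable.ofNat_encode c
  simp only [DB, Bool.and_eq_true, decide_eq_true_eq, hco] at hfind0
  obtain ⟨-, hsome⟩ := hfind0
  obtain ⟨y₀, hy₀⟩ := Option.isSome_iff_exists.1 hsome
  have hmem : y₀ ∈ eval c n₀.unpair.1 := evaln_sound (Option.mem_def.mpr hy₀)
  refine ⟨n₀.unpair.1, hS, ?_⟩
  rw [← hc]
  exact Part.dom_iff_mem.2 ⟨y₀, hmem⟩

end NotOmegaDivAux

end NotOmegaDivSection

namespace NotOmegaDivAux

theorem recIn_of_natPartrec {f : ℕ →. ℕ} (h : Nat.Partrec f) : RecursiveInSet ∅ f := by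
  induction h with
  | zero => exact RecursiveInSet.zero
  | succ => exact RecursiveInSet.succ
  | left => exact RecursiveInSet.left
  | right => exact RecursiveInSet.right
  | pair _ _ ihf ihg => exact RecursiveInSet.pair ihf ihg
  | comp _ _ ihf ihg => exact RecursiveInSet.comp ihf ihg
  | prec _ _ ihf ihg => exact RecursiveInSet.prec ihf ihg
  | rfind _ ih => exact RecursiveInSet.rfind ih

theorem natPartrec_of_recIn {f : ℕ →. ℕ} (h : RecursiveInSet ∅ f) : Nat.Partrec f := by
  induction h with
  | zero => exact Nat.Partrec.zero
  | succ => exact Nat.Partrec.succ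
  | left => exact Nat.Partrec.left
  | right => exact Nat.Partrec.right
  | oracle => exact Nat.Partrec.zero.of_eq fun n => by simp [Set.indicator]; rfl
  | pair _ _ ihf ihg => exact Nat.Partrec.pair ihf ihg
  | comp _ _ ihf ihg => exact Nat.Partrec.comp ihf ihg
  | prec _ _ ihf ihg => exact Nat.Partrec.prec ihf ihg
  | rfind _ ih => exact Nat.Partrec.rfind ih

/-- A set with a total computable semidecision procedure is `CEIn ∅`. -/
theorem ceIn_of_bool {f : ℕ → ℕ → Bool} (hf : Computable₂ f) :
    CEIn ∅ {a : ℕ | ∃ n, f a n = true} := by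
  refine ⟨fun a => Nat.rfind fun n => Part.some (f a n), ?_, ?_⟩
  · apply recIn_of_natPartrec
    apply Partrec.nat_iff.1
    exact Partrec.rfind (Computable₂.partrec₂ hf)
  · ext a
    simp only [Set.mem_setOf_eq, PFun.mem_dom]
    constructor
    · rintro ⟨n, hn⟩
      exact ⟨n, by simp [hn], fun _ _ => trivial⟩
    · rintro ⟨y, hy⟩
      have := hy.1
      simp only [Part.mem_some_iff] at this
      exact ⟨y, this.symm⟩

end NotOmegaDivAux


namespace NotOmegaDivAux

def inS (m s : ℕ) : Bool := bany (wB2 m) s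

theorem inS_prim : Primrec₂ inS := bany_prim wB2_prim

theorem inS_mono {m s s' : ℕ} (h : s ≤ s') (hi : inS m s = true) : inS m s' = true :=
  bany_mono h hi

theorem exists_inS_iff {m : ℕ} : (∃ s, inS m s = true) ↔ m ∈ Spost := by
  rw [mem_Spost_iff]
  constructor
  · rintro ⟨s, hs⟩
    obtain ⟨p, -, hp⟩ := (bany_iff _ _).1 hs
    exact ⟨p, hp⟩
  · rintro ⟨p, hp⟩
    exact ⟨p + 1, (bany_iff _ _).2 ⟨p, Nat.lt_succ_self p, hp⟩⟩

/-- bounded enumeration of the graph of the ceer `γ`. -/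
def GB (k s : ℕ) : Bool :=
  (k.unpair.1 == k.unpair.2) || (inS k.unpair.1 s && inS k.unpair.2 s)

theorem GB_prim : Primrec₂ GB := by
  have h1 : Primrec₂ fun (k _s : ℕ) => (k.unpair.1 == k.unpair.2) :=
    Primrec.beq.comp ((Primrec.fst.comp Primrec.unpair).comp Primrec.fst)
      ((Primrec.snd.comp Primrec.unpair).comp Primrec.fst)
  have h2 : Primrec₂ fun (k s : ℕ) => inS k.unpair.1 s :=
    inS_prim.comp ((Primrec.fst.comp Primrec.unpair).comp Primrec.fst) Primrec.snd
  have h3 : Primrec₂ fun (k s : ℕ) => inS k.unpair.2 s :=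
    inS_prim.comp ((Primrec.snd.comp Primrec.unpair).comp Primrec.fst) Primrec.snd
  exact Primrec.or.comp₂ h1 (Primrec.and.comp₂ h2 h3)

theorem exists_GB_iff {k : ℕ} :
    (∃ s, GB k s = true) ↔
      (k.unpair.1 = k.unpair.2 ∨ (k.unpair.1 ∈ Spost ∧ k.unpair.2 ∈ Spost)) := by
  constructor
  · rintro ⟨s, hs⟩
    simp only [GB, Bool.or_eq_true, Bool.and_eq_true, beq_iff_eq] at hs
    rcases hs with h | ⟨h1, h2⟩
    · exact Or.inl h
    · exact Or.inr ⟨exists_inS_iff.1 ⟨s, h1⟩, exists_inS_iff.1 ⟨s, h2⟩⟩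
  · rintro (h | ⟨h1, h2⟩)
    · exact ⟨0, by simp [GB, h]⟩
    · obtain ⟨s1, hs1⟩ := exists_inS_iff.2 h1
      obtain ⟨s2, hs2⟩ := exists_inS_iff.2 h2
      refine ⟨max s1 s2, ?_⟩
      simp only [GB, Bool.or_eq_true, Bool.and_eq_true]
      exact Or.inr ⟨inS_mono (le_max_left _ _) hs1, inS_mono (le_max_right _ _) hs2⟩

/-- A total computable semidecision procedure yields a `Partrec` function with
the corresponding domain. -/
theorem partrec_semidecide {f : ℕ → ℕ → Bool} (hf : Computable₂ f) :
    ∃ p : ℕ →. ℕ, _root_.Partrec p ∧ p.Dom = {a : ℕ | ∃ n, f a n = true} := by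
  refine ⟨fun a => Nat.rfind fun n => Part.some (f a n), ?_, ?_⟩
  · exact Partrec.rfind (Computable₂.partrec₂ hf)
  · ext a
    simp only [Set.mem_setOf_eq, PFun.mem_dom]
    constructor
    · rintro ⟨y, hy⟩
      have := hy.1
      simp only [Part.mem_some_iff] at this
      exact ⟨y, this.symm⟩
    · rintro ⟨n, hn⟩
      exact ⟨n, by simp [hn], fun _ _ => trivial⟩

end NotOmegaDivAux

/-- There exists a c.e. numbering with infinitely many equivalence
classes that is not `ω`-divisible. -/
theorem exists_ce_numbering_not_omega_divisible :
    ∃ γ : ℕ → ℕ → Prop, Equivalence γ ∧ CENumbering γ ∧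
      (∀ n : ℕ, ∃ x : Fin n → ℕ, ∀ i j : Fin n, i ≠ j → ¬ γ (x i) (x j)) ∧
      ¬ DivisibleOmega γ ∅ := by
  classical
  refine ⟨fun a b => a = b ∨ (a ∈ NotOmegaDivAux.Spost ∧ b ∈ NotOmegaDivAux.Spost),
    ⟨fun a => Or.inl rfl, ?_, ?_⟩, ?_, ?_, ?_⟩
  · rintro a b (rfl | ⟨h1, h2⟩)
    · exact Or.inl rfl
    · exact Or.inr ⟨h2, h1⟩
  · rintro a b c (rfl | ⟨h1, h2⟩) (rfl | ⟨h3, h4⟩)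
    · exact Or.inl rfl
    · exact Or.inr ⟨h3, h4⟩
    · exact Or.inr ⟨h1, h2⟩
    · exact Or.inr ⟨h1, h4⟩
  · -- CENumbering
    obtain ⟨p, hp, hdom⟩ :=
      NotOmegaDivAux.partrec_semidecide NotOmegaDivAux.GB_prim.to_comp
    refine ⟨p, NotOmegaDivAux.recIn_of_natPartrec (Partrec.nat_iff.1 hp), ?_⟩
    rw [hdom]
    ext k
    simp only [Set.mem_setOf_eq]
    exact NotOmegaDivAux.exists_GB_iff.symm
  · -- infinitely many classes
    intro n
    have hinf := NotOmegaDivAux.Spost_compl_infinite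
    let emb := hinf.natEmbedding
    refine ⟨fun i => (emb (i : ℕ)).1, ?_⟩
    intro i j hij hγ
    rcases hγ with h | ⟨h1, _⟩
    · exact hij (Fin.ext (emb.injective (Subtype.coe_injective h)))
    · exact (emb (i : ℕ)).2 h1
  · -- not omega-divisible
    rintro ⟨x, X, hx, -, hsub, hdisj⟩
    have hxc : Computable x :=
      Partrec.nat_iff.2 (NotOmegaDivAux.natPartrec_of_recIn hx)
    have hne : ∀ i j, i ≠ j →
        ¬ (x i = x j ∨ (x i ∈ NotOmegaDivAux.Spost ∧ x j ∈ NotOmegaDivAux.Spost)) := by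
      intro i j hij hγ
      have hxj1 : x j ∈ {m | x i = m ∨ (x i ∈ NotOmegaDivAux.Spost ∧
          m ∈ NotOmegaDivAux.Spost)} := hγ
      have hxj2 : x j ∈ X j := hsub j (Or.inl rfl)
      exact Set.eq_empty_iff_forall_notMem.1 (hdisj i j hij) (x j) ⟨hxj1, hxj2⟩
    have hinj : Function.Injective x := fun i j h => by
      by_contra hij
      exact hne i j hij (Or.inl h)
    have hkey : ∃ i0 : ℕ, ∀ i, x i ∈ NotOmegaDivAux.Spost → i = i0 := by
      by_cases h : ∃ i, x i ∈ NotOmegaDivAux.Spost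
      · obtain ⟨i0, hi0⟩ := h
        refine ⟨i0, fun i hi => ?_⟩
        by_contra hii
        exact hne i i0 hii (Or.inr ⟨hi, hi0⟩)
      · exact ⟨0, fun i hi => absurd ⟨i, hi⟩ h⟩
    obtain ⟨i0, hi0⟩ := hkey
    have hcomp : Computable₂ fun (m i : ℕ) => ((x i == m) && !(i == i0)) := by
      exact (Primrec.and.to_comp.comp
        (Primrec.beq.to_comp.comp (hxc.comp Computable.snd) Computable.fst)
        ((Primrec.not.comp
          (Primrec.beq.comp Primrec.snd (Primrec.const i0))).to_comp)).to₂
    obtain ⟨p, hp, hdom⟩ := NotOmegaDivAux.partrec_semidecide hcomp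
    have hdomeq : p.Dom = x '' {i | i ≠ i0} := by
      rw [hdom]
      ext m
      simp only [Set.mem_setOf_eq, Set.mem_image, Bool.and_eq_true, beq_iff_eq,
        Bool.not_eq_true', beq_eq_false_iff_ne, ne_eq]
      constructor
      · rintro ⟨i, hxi, hii⟩
        exact ⟨i, hii, hxi⟩
      · rintro ⟨i, hii, hxi⟩
        exact ⟨i, hxi, hii⟩
    have hinfdom : p.Dom.Infinite := by
      rw [hdomeq]
      have h1 : ({i0}ᶜ : Set ℕ).Infinite := (Set.finite_singleton i0).infinite_compl
      have h2 : ({i0}ᶜ : Set ℕ) = {i | i ≠ i0} := by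
        ext i; simp
      rw [h2] at h1
      exact Set.Infinite.image hinj.injOn h1
    obtain ⟨m, hmS, hmD⟩ := NotOmegaDivAux.Spost_simple hp hinfdom
    rw [hdomeq] at hmD
    obtain ⟨i, hi, rfl⟩ := hmD
    exact hi (hi0 i hmS)
end

section
/- Recursion theorem for relatively precomplete numberings: if γ is an A-precomplete numbering, then every total A-computable function f: ℕ → ℕ has a fixpoint modulo γ, i.e. there is an n ∈ ℕ such that f(n) ∼_γ n. -/
open Nat Part

namespace RecFixAux

open Nat.Partrec (Code)
open Nat.Partrec.Code

/-- Finite approximation to the characteristic function of `A`: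
the code of the list `[χ_A 0, ..., χ_A (k-1)]`. -/
noncomputable def Gfun (A : Set ℕ) (k : ℕ) : ℕ :=
  Encodable.encode (((List.range k).map (A.indicator 1)) : List ℕ)

theorem recIn_of_eq {A : Set ℕ} {f g : ℕ →. ℕ} (hf : RecursiveInSet A f)
    (H : ∀ n, f n = g n) : RecursiveInSet A g := (funext H : f = g) ▸ hf

theorem recIn_of_partrec {A : Set ℕ} {f : ℕ →. ℕ} (hf : Nat.Partrec f) :
    RecursiveInSet A f := by
  induction hf with
  | zero => exact .zero
  | succ => exact .succ
  | left => exact .left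
  | right => exact .right
  | pair _ _ ihf ihg => exact .pair ihf ihg
  | comp _ _ ihf ihg => exact .comp ihf ihg
  | prec _ _ ihf ihg => exact .prec ihf ihg
  | rfind _ ih => exact .rfind ih

@[simp]
theorem bind_pfun (x : Part ℕ) (f : ℕ →. ℕ) : (x >>= f) = x.bind (fun a => f a) := rfl

theorem get?_G (A : Set ℕ) (k x : ℕ) :
    (((List.range k).map (A.indicator 1)) : List ℕ)[x]? =
      if x < k then Option.some (A.indicator 1 x) else none := by
  rcases lt_or_ge x k with h | h
  · simp [List.getElem?_map, List.getElem?_range, h]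
  · rw [if_neg (not_lt.2 h)]
    simp [List.getElem?_map, List.getElem?_range, not_lt.2 h, h]

theorem oracle_eq (A : Set ℕ) (n : ℕ) :
    (A.indicator (1 : ℕ → Part ℕ) n) = Part.some (A.indicator 1 n) := by
  by_cases hn : n ∈ A <;>
    simp [Set.indicator_apply, hn, Part.one_def] <;> rfl


/-- Every `A`-recursive partial function can be simulated by a plain partial
recursive function taking a finite oracle approximation as extra input,
monotonically in the approximation. -/
theorem exists_simulator {A : Set ℕ} {p : ℕ →. ℕ} (hp : RecursiveInSet A p) :
    ∃ Q : ℕ →. ℕ, Nat.Partrec Q ∧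
      (∀ k k', k ≤ k' → ∀ x m, m ∈ Q (Nat.pair (Gfun A k) x) →
        m ∈ Q (Nat.pair (Gfun A k') x)) ∧
      (∀ x m, m ∈ p x ↔ ∃ k, m ∈ Q (Nat.pair (Gfun A k) x)) := by
  induction hp with
  | zero =>
      exact ⟨pure 0, Nat.Partrec.zero, fun _ _ _ _ _ h => h,
        fun x m => ⟨fun h => ⟨0, h⟩, fun ⟨_, h⟩ => h⟩⟩
  | succ =>
      refine ⟨fun z => Part.some z.unpair.2.succ,
        (Nat.Partrec.succ.comp Nat.Partrec.right).of_eq fun n => by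
          simp [PFun.coe_val], ?_, ?_⟩
      · intro k k' _ x m h
        simp only [Nat.unpair_pair] at h ⊢; exact h
      · intro x m
        simp [PFun.coe_val, Part.mem_some_iff, Nat.unpair_pair]
  | left =>
      refine ⟨fun z => Part.some z.unpair.2.unpair.1,
        (Nat.Partrec.left.comp Nat.Partrec.right).of_eq fun n => by
          simp [PFun.coe_val], ?_, ?_⟩
      · intro k k' _ x m h
        simp only [Nat.unpair_pair] at h ⊢; exact h
      · intro x m
        simp [PFun.coe_val, Part.mem_some_iff, Nat.unpair_pair]
  | right =>
      refine ⟨fun z => Part.some z.unpair.2.unpair.2,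
        (Nat.Partrec.right.comp Nat.Partrec.right).of_eq fun n => by
          simp [PFun.coe_val], ?_, ?_⟩
      · intro k k' _ x m h
        simp only [Nat.unpair_pair] at h ⊢; exact h
      · intro x m
        simp [PFun.coe_val, Part.mem_some_iff, Nat.unpair_pair]
  | oracle =>
      refine ⟨fun z => Part.ofOption
          (((Denumerable.ofNat (List ℕ) z.unpair.1) : List ℕ)[z.unpair.2]?), ?_, ?_, ?_⟩
      · exact Partrec.nat_iff.1 (Computable.ofOption (Computable.list_getElem?.comp
          ((Computable.ofNat (List ℕ)).comp (Computable.fst.comp Primrec.unpair.to_comp))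
          (Computable.snd.comp Primrec.unpair.to_comp)))
      · intro k k' hkk' x m h
        simp only [Nat.unpair_pair, Gfun, Denumerable.ofNat_encode, get?_G,
          Part.mem_ofOption] at h ⊢
        split_ifs at h with hx
        · rw [if_pos (lt_of_lt_of_le hx hkk')]; exact h
        · simp at h
      · intro x m
        constructor
        · intro h
          simp only [oracle_eq] at h
          have hm : m = A.indicator 1 x := Part.mem_some_iff.1 h
          refine ⟨x + 1, ?_⟩
          simp [Nat.unpair_pair, Gfun, Denumerable.ofNat_encode, get?_G,
            Part.mem_ofOption, Nat.lt_succ_self, hm]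
        · rintro ⟨k, h⟩
          simp only [Nat.unpair_pair, Gfun, Denumerable.ofNat_encode, get?_G,
            Part.mem_ofOption] at h
          split_ifs at h with hx
          · simp only [Option.mem_some_iff] at h
            simp only [oracle_eq]
            exact Part.mem_some_iff.2 h.symm
          · simp at h
  | @pair f g hf hg ihf ihg =>
      obtain ⟨Qf, pf, monof, corrf⟩ := ihf
      obtain ⟨Qg, pg, monog, corrg⟩ := ihg
      have memps : ∀ (a b : Part ℕ) (m : ℕ),
          m ∈ (Nat.pair <$> a <*> b) ↔ ∃ u ∈ a, ∃ v ∈ b, Nat.pair u v = m := by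
        intro a b m
        simp [Seq.seq, Part.bind_eq_bind, Part.mem_bind_iff, Part.mem_map_iff]
      refine ⟨fun z => Nat.pair <$> Qf z <*> Qg z, Nat.Partrec.pair pf pg, ?_, ?_⟩
      · intro k k' hkk' x m h
        obtain ⟨u, hu, v, hv, rfl⟩ := (memps _ _ _).1 h
        exact (memps _ _ _).2 ⟨u, monof _ _ hkk' _ _ hu, v, monog _ _ hkk' _ _ hv, rfl⟩
      · intro x m
        constructor
        · intro h
          obtain ⟨u, hu, v, hv, rfl⟩ := (memps _ _ _).1 h
          obtain ⟨k₁, hk₁⟩ := (corrf x u).1 hu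
          obtain ⟨k₂, hk₂⟩ := (corrg x v).1 hv
          exact ⟨max k₁ k₂, (memps _ _ _).2 ⟨u, monof _ _ (le_max_left _ _) _ _ hk₁,
            v, monog _ _ (le_max_right _ _) _ _ hk₂, rfl⟩⟩
        · rintro ⟨k, h⟩
          obtain ⟨u, hu, v, hv, rfl⟩ := (memps _ _ _).1 h
          exact (memps _ _ _).2 ⟨u, (corrf x u).2 ⟨k, hu⟩, v, (corrg x v).2 ⟨k, hv⟩, rfl⟩
  | @comp f g hf hg ihf ihg =>
      obtain ⟨Qf, pf, monof, corrf⟩ := ihf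
      obtain ⟨Qg, pg, monog, corrg⟩ := ihg
      refine ⟨fun z => Qg z >>= fun i => Qf (Nat.pair z.unpair.1 i),
        (pf.comp (Nat.Partrec.pair Nat.Partrec.left pg)).of_eq fun z => by
          apply Part.ext; intro m
          simp [Seq.seq, Part.bind_eq_bind, Part.mem_bind_iff, Part.mem_map_iff,
            PFun.coe_val, Part.mem_some_iff], ?_, ?_⟩
      · intro k k' hkk' x m h
        simp only [Part.bind_eq_bind, Part.mem_bind_iff, Nat.unpair_pair] at h ⊢
        obtain ⟨i, hi, hm⟩ := h
        exact ⟨i, monog _ _ hkk' _ _ hi, monof _ _ hkk' _ _ hm⟩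
      · intro x m
        constructor
        · intro h
          obtain ⟨i, hi, hm⟩ := Part.mem_bind_iff.1 h
          obtain ⟨k₁, hk₁⟩ := (corrg x i).1 hi
          obtain ⟨k₂, hk₂⟩ := (corrf i m).1 hm
          refine ⟨max k₁ k₂, ?_⟩
          simp only [Part.bind_eq_bind, Part.mem_bind_iff, Nat.unpair_pair]
          exact ⟨i, monog _ _ (le_max_left _ _) _ _ hk₁, monof _ _ (le_max_right _ _) _ _ hk₂⟩
        · rintro ⟨k, h⟩
          simp only [Part.bind_eq_bind, Part.mem_bind_iff, Nat.unpair_pair] at h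
          obtain ⟨i, hi, hm⟩ := h
          exact Part.mem_bind_iff.2 ⟨i, (corrg x i).2 ⟨k, hi⟩, (corrf i m).2 ⟨k, hm⟩⟩
  | @prec f g hf hg ihf ihg =>
      obtain ⟨Qf, pf, monof, corrf⟩ := ihf
      obtain ⟨Qg, pg, monog, corrg⟩ := ihg
      have pr1 : Primrec (fun w : ℕ => w.unpair.1) := Primrec.fst.comp Primrec.unpair
      have pr2 : Primrec (fun w : ℕ => w.unpair.2) := Primrec.snd.comp Primrec.unpair
      have rearrP : Nat.Partrec (fun w : ℕ =>
          Part.some (Nat.pair w.unpair.1.unpair.1 (Nat.pair w.unpair.1.unpair.2 w.unpair.2))) :=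
        Partrec.nat_iff.1 (Primrec.to_comp
          (Primrec₂.natPair.comp (pr1.comp pr1) (Primrec₂.natPair.comp (pr2.comp pr1) pr2)))
      have repackP : Nat.Partrec (fun z : ℕ =>
          Part.some (Nat.pair (Nat.pair z.unpair.1 z.unpair.2.unpair.1) z.unpair.2.unpair.2)) :=
        Partrec.nat_iff.1 (Primrec.to_comp
          (Primrec₂.natPair.comp (Primrec₂.natPair.comp pr1 (pr1.comp pr2)) (pr2.comp pr2)))
      have chain_mono : ∀ k k', k ≤ k' → ∀ a n m,
          m ∈ (Nat.rec (Qf (Nat.pair (Gfun A k) a))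
              (fun y IH => IH >>= fun i =>
                Qg (Nat.pair (Gfun A k) (Nat.pair a (Nat.pair y i)))) n : Part ℕ) →
          m ∈ (Nat.rec (Qf (Nat.pair (Gfun A k') a))
              (fun y IH => IH >>= fun i =>
                Qg (Nat.pair (Gfun A k') (Nat.pair a (Nat.pair y i)))) n : Part ℕ) := by
        intro k k' hkk' a n
        induction n with
        | zero => exact fun m h => monof _ _ hkk' _ _ h
        | succ y ih =>
            intro m h
            obtain ⟨i, hi, hm⟩ := Part.mem_bind_iff.1 h
            exact Part.mem_bind_iff.2 ⟨i, ih _ hi, monog _ _ hkk' _ _ hm⟩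
      have chain_corr : ∀ a n m,
          m ∈ (Nat.rec (f a) (fun y IH => IH >>= fun i =>
              g (Nat.pair a (Nat.pair y i))) n : Part ℕ) ↔
          ∃ k, m ∈ (Nat.rec (Qf (Nat.pair (Gfun A k) a))
              (fun y IH => IH >>= fun i =>
                Qg (Nat.pair (Gfun A k) (Nat.pair a (Nat.pair y i)))) n : Part ℕ) := by
        intro a n
        induction n with
        | zero => exact corrf _
        | succ y ih =>
            intro m
            constructor
            · intro h
              obtain ⟨i, hi, hm⟩ := Part.mem_bind_iff.1 h
              obtain ⟨k₁, hk₁⟩ := (ih i).1 hi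
              obtain ⟨k₂, hk₂⟩ := (corrg _ m).1 hm
              exact ⟨max k₁ k₂, Part.mem_bind_iff.2
                ⟨i, chain_mono _ _ (le_max_left _ _) _ _ _ hk₁,
                  monog _ _ (le_max_right _ _) _ _ hk₂⟩⟩
            · rintro ⟨k, h⟩
              obtain ⟨i, hi, hm⟩ := Part.mem_bind_iff.1 h
              exact Part.mem_bind_iff.2 ⟨i, (ih i).2 ⟨k, hi⟩, (corrg _ m).2 ⟨k, hm⟩⟩
      refine ⟨fun z => Nat.rec (Qf (Nat.pair z.unpair.1 z.unpair.2.unpair.1))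
          (fun y IH => IH >>= fun i =>
            Qg (Nat.pair z.unpair.1 (Nat.pair z.unpair.2.unpair.1 (Nat.pair y i))))
          z.unpair.2.unpair.2, ?_, ?_, ?_⟩
      · refine ((Nat.Partrec.prec pf (pg.comp rearrP)).comp repackP).of_eq fun z => ?_
        simp [Nat.unpaired, Nat.unpair_pair, Part.bind_eq_bind, Part.bind_some]
      · intro k k' hkk' x m h
        simp only [Nat.unpair_pair] at h ⊢
        exact chain_mono _ _ hkk' _ _ _ h
      · intro x m
        have := chain_corr x.unpair.1 x.unpair.2 m
        simpa only [Nat.unpaired, Nat.unpair_pair] using this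
  | @rfind f hf ihf =>
      obtain ⟨Qf, pf, monof, corrf⟩ := ihf
      have pr1 : Primrec (fun w : ℕ => w.unpair.1) := Primrec.fst.comp Primrec.unpair
      have pr2 : Primrec (fun w : ℕ => w.unpair.2) := Primrec.snd.comp Primrec.unpair
      have rearrP : Nat.Partrec (fun w : ℕ =>
          Part.some (Nat.pair w.unpair.1.unpair.1 (Nat.pair w.unpair.1.unpair.2 w.unpair.2))) :=
        Partrec.nat_iff.1 (Primrec.to_comp
          (Primrec₂.natPair.comp (pr1.comp pr1) (Primrec₂.natPair.comp (pr2.comp pr1) pr2)))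
      refine ⟨fun z => Nat.rfind fun n =>
          (fun m => m = 0) <$> Qf (Nat.pair z.unpair.1 (Nat.pair z.unpair.2 n)),
        (Nat.Partrec.rfind (pf.comp rearrP)).of_eq fun z => by
          simp [Nat.unpair_pair, Part.bind_eq_bind, Part.bind_some], ?_, ?_⟩
      · intro k k' hkk' x m h
        simp only [Nat.unpair_pair] at h ⊢
        have h1 := Nat.rfind_spec h
        refine Nat.mem_rfind.2 ⟨?_, fun {j} hj => ?_⟩
        · obtain ⟨v, hv, ev⟩ := (Part.mem_map_iff _).1 h1
          exact (Part.mem_map_iff _).2 ⟨v, monof _ _ hkk' _ _ hv, ev⟩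
        · obtain ⟨w, hw, ew⟩ := (Part.mem_map_iff _).1 (Nat.rfind_min h hj)
          exact (Part.mem_map_iff _).2 ⟨w, monof _ _ hkk' _ _ hw, ew⟩
      · intro x m
        constructor
        · intro h
          have h1 := Nat.rfind_spec h
          obtain ⟨v, hv, ev⟩ := (Part.mem_map_iff _).1 h1
          obtain ⟨k₀, hk₀⟩ := (corrf _ v).1 hv
          have below : ∀ b, b ≤ m → ∃ k, ∀ j, j < b →
              false ∈ (fun m' => decide (m' = 0)) <$>
                Qf (Nat.pair (Gfun A k) (Nat.pair x j)) := by
            intro b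
            induction b with
            | zero => exact fun _ => ⟨0, fun j hj => absurd hj (Nat.not_lt_zero j)⟩
            | succ b ih =>
                intro hb
                obtain ⟨k₁, hk₁⟩ := ih (Nat.le_of_succ_le hb)
                obtain ⟨w, hw, ew⟩ := (Part.mem_map_iff _).1 (Nat.rfind_min h hb)
                obtain ⟨k₂, hk₂⟩ := (corrf _ w).1 hw
                refine ⟨max k₁ k₂, fun j hj => ?_⟩
                rcases Nat.lt_succ_iff_lt_or_eq.1 hj with hj | rfl
                · obtain ⟨w', hw', ew'⟩ := (Part.mem_map_iff _).1 (hk₁ j hj)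
                  exact (Part.mem_map_iff _).2 ⟨w', monof _ _ (le_max_left _ _) _ _ hw', ew'⟩
                · exact (Part.mem_map_iff _).2 ⟨w, monof _ _ (le_max_right _ _) _ _ hk₂, ew⟩
          obtain ⟨k₁, hbel⟩ := below m le_rfl
          refine ⟨max k₀ k₁, ?_⟩
          simp only [Nat.unpair_pair]
          refine Nat.mem_rfind.2
            ⟨(Part.mem_map_iff _).2 ⟨v, monof _ _ (le_max_left _ _) _ _ hk₀, ev⟩,
              fun {j} hj => ?_⟩
          obtain ⟨w', hw', ew'⟩ := (Part.mem_map_iff _).1 (hbel j hj)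
          exact (Part.mem_map_iff _).2 ⟨w', monof _ _ (le_max_right _ _) _ _ hw', ew'⟩
        · rintro ⟨k, h⟩
          simp only [Nat.unpair_pair] at h
          have h1 := Nat.rfind_spec h
          refine Nat.mem_rfind.2 ⟨?_, fun {j} hj => ?_⟩
          · obtain ⟨v, hv, ev⟩ := (Part.mem_map_iff _).1 h1
            exact (Part.mem_map_iff _).2 ⟨v, (corrf _ v).2 ⟨k, hv⟩, ev⟩
          · obtain ⟨w, hw, ew⟩ := (Part.mem_map_iff _).1 (Nat.rfind_min h hj)
            exact (Part.mem_map_iff _).2 ⟨w, (corrf _ w).2 ⟨k, hw⟩, ew⟩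

theorem someIn {A : Set ℕ} : RecursiveInSet A (fun n : ℕ => Part.some n) :=
  recIn_of_eq (recIn_of_partrec (Partrec.nat_iff.1 Computable.id)) fun _ => rfl

theorem pr1 : Primrec (fun w : ℕ => w.unpair.1) := Primrec.fst.comp Primrec.unpair
theorem pr2 : Primrec (fun w : ℕ => w.unpair.2) := Primrec.snd.comp Primrec.unpair

/-- `A`-computability of the oracle approximations. -/
theorem G_in (A : Set ℕ) : RecursiveInSet A (fun k => Part.some (Gfun A k)) := by
  have hy : RecursiveInSet A (fun w : ℕ => Part.some w.unpair.2.unpair.1) :=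
    recIn_of_eq (recIn_of_partrec (Partrec.nat_iff.1 ((pr1.comp pr2).to_comp))) fun _ => rfl
  have hchi : RecursiveInSet A (fun w : ℕ => Part.some (A.indicator 1 w.unpair.2.unpair.1)) := by
    refine recIn_of_eq (RecursiveInSet.comp .oracle hy) fun w => ?_
    simp [Part.bind_eq_bind, Part.bind_some, oracle_eq]
  have hpairW : RecursiveInSet A
      (fun w : ℕ => Part.some (Nat.pair w (A.indicator 1 w.unpair.2.unpair.1))) := by
    refine recIn_of_eq (RecursiveInSet.pair someIn hchi) fun w => ?_
    simp [Seq.seq, Part.bind_eq_bind, Part.bind_some]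
  have hcomb : Primrec (fun u : ℕ => Encodable.encode
      (((Denumerable.ofNat (List ℕ) u.unpair.1.unpair.2.unpair.2) : List ℕ) ++ [u.unpair.2])) :=
    Primrec.encode.comp (Primrec.list_append.comp
      ((Primrec.ofNat (List ℕ)).comp (pr2.comp (pr2.comp pr1)))
      (Primrec.list_cons.comp pr2 (Primrec.const [])))
  have hg0 : RecursiveInSet A (fun w : ℕ => Part.some (Encodable.encode
      (((Denumerable.ofNat (List ℕ) w.unpair.2.unpair.2) : List ℕ) ++
        [A.indicator 1 w.unpair.2.unpair.1]))) := by
    refine recIn_of_eq (RecursiveInSet.comp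
      (recIn_of_partrec (Partrec.nat_iff.1 hcomb.to_comp)) hpairW) fun w => ?_
    simp [Part.bind_eq_bind, Part.bind_some, Nat.unpair_pair]
  have hf0 : RecursiveInSet A (fun _ : ℕ => Part.some (Encodable.encode ([] : List ℕ))) :=
    recIn_of_eq (recIn_of_partrec (Partrec.nat_iff.1 (Computable.const _))) fun _ => rfl
  have hpk : RecursiveInSet A (fun k : ℕ => Part.some (Nat.pair 0 k)) :=
    recIn_of_eq (recIn_of_partrec (Partrec.nat_iff.1
      ((Primrec₂.natPair.comp (Primrec.const 0) Primrec.id).to_comp))) fun _ => rfl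
  refine recIn_of_eq (RecursiveInSet.comp (RecursiveInSet.prec hf0 hg0) hpk) fun k => ?_
  simp only [Part.bind_eq_bind, Part.bind_some, Nat.unpaired, Nat.unpair_pair]
  induction k with
  | zero => simp [Gfun]
  | succ k ih =>
      change Part.bind (Nat.rec _ _ k) _ = _
      rw [ih, Part.bind_some]
      simp only [Gfun, Denumerable.ofNat_encode]
      rw [List.range_succ, List.map_append]
      simp

/-- The plain (unrelativized) step-bounded halting test. -/
def plainT (w : ℕ) : ℕ :=
  cond (Nat.Partrec.Code.evaln w.unpair.1.unpair.2.unpair.2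
    (Denumerable.ofNat Nat.Partrec.Code w.unpair.1.unpair.1)
    (Nat.pair w.unpair.2 w.unpair.1.unpair.1)).isSome 0 1

/-- The plain step-bounded evaluation. -/
def plainO (w : ℕ) : Part ℕ :=
  Part.ofOption (Nat.Partrec.Code.evaln w.unpair.1.unpair.2.unpair.2
    (Denumerable.ofNat Nat.Partrec.Code w.unpair.1.unpair.1)
    (Nat.pair w.unpair.2 w.unpair.1.unpair.1))

/-- Packaging the input together with an oracle approximation. -/
noncomputable def pack (A : Set ℕ) (z : ℕ) : ℕ :=
  Nat.pair z (Gfun A z.unpair.2.unpair.1)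

theorem he_prim : Primrec (fun w : ℕ => Nat.Partrec.Code.evaln w.unpair.1.unpair.2.unpair.2
    (Denumerable.ofNat Nat.Partrec.Code w.unpair.1.unpair.1)
    (Nat.pair w.unpair.2 w.unpair.1.unpair.1)) :=
  Nat.Partrec.Code.primrec_evaln.comp
    (((pr2.comp (pr2.comp pr1)).pair
      ((Primrec.ofNat Nat.Partrec.Code).comp (pr1.comp pr1))).pair
      (Primrec₂.natPair.comp pr2 (pr1.comp pr1)))

theorem pack_in (A : Set ℕ) : RecursiveInSet A (fun z => Part.some (pack A z)) := by
  have hk1 : RecursiveInSet A (fun z : ℕ => Part.some z.unpair.2.unpair.1) :=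
    recIn_of_eq (recIn_of_partrec (Partrec.nat_iff.1 ((pr1.comp pr2).to_comp))) fun _ => rfl
  refine recIn_of_eq (RecursiveInSet.pair someIn (RecursiveInSet.comp (G_in A) hk1)) fun z => ?_
  simp [pack, Seq.seq, Part.bind_eq_bind, Part.bind_some]

theorem tFn_in (A : Set ℕ) : RecursiveInSet A (fun z => Part.some (plainT (pack A z))) := by
  have hT : Primrec plainT :=
    Primrec.cond (Primrec.option_isSome.comp he_prim) (Primrec.const 0) (Primrec.const 1)
  refine recIn_of_eq (RecursiveInSet.comp
    (recIn_of_partrec (Partrec.nat_iff.1 hT.to_comp)) (pack_in A)) fun z => ?_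
  simp [Part.bind_eq_bind, Part.bind_some]

theorem oFn_in (A : Set ℕ) : RecursiveInSet A (fun z => plainO (pack A z)) := by
  have hO : Nat.Partrec plainO :=
    Partrec.nat_iff.1 (Computable.ofOption he_prim.to_comp)
  refine recIn_of_eq (RecursiveInSet.comp (recIn_of_partrec hO) (pack_in A)) fun z => ?_
  simp [Part.bind_eq_bind, Part.bind_some]

/-- The `A`-relativized diagonal function. -/
noncomputable def psi (A : Set ℕ) : ℕ →. ℕ := fun x =>
  (Nat.pair <$> Part.some x <*> Nat.rfind fun K =>
      (fun m => m = 0) <$> Part.some (plainT (pack A (Nat.pair x K)))) >>=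
    fun z => plainO (pack A z)

theorem psi_recIn (A : Set ℕ) : RecursiveInSet A (psi A) :=
  recIn_of_eq
    (RecursiveInSet.comp (oFn_in A) (RecursiveInSet.pair someIn (RecursiveInSet.rfind (tFn_in A))))
    fun _ => rfl

end RecFixAux

/-- Recursion theorem for relatively precomplete numberings:
if `γ` is `A`-precomplete then every total `A`-computable function has a
fixpoint modulo `γ`. -/
theorem recursion_theorem_precompleteIn (γ : ℕ → ℕ → Prop) (hγ : Equivalence γ)
    (A : Set ℕ) (hpre : PrecompleteIn γ A)
    (f : ℕ → ℕ) (hf : ComputableInSet A f) : ∃ n : ℕ, γ (f n) n := by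
  classical
  obtain ⟨h, hh, hlift⟩ := hpre (RecFixAux.psi A) (RecFixAux.psi_recIn A)
  have hp : RecursiveInSet A (fun x => Part.some (f (h x))) :=
    RecFixAux.recIn_of_eq (RecursiveInSet.comp hf hh) fun n => by
      simp [Part.bind_eq_bind, Part.bind_some]
  obtain ⟨Q, hQ, mono, corr⟩ := RecFixAux.exists_simulator hp
  obtain ⟨c, hc⟩ := Nat.Partrec.Code.exists_code.1 hQ
  obtain ⟨e, he⟩ : ∃ e : ℕ, e = Encodable.encode c := ⟨_, rfl⟩
  have hoc : Denumerable.ofNat Nat.Partrec.Code e = c := by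
    rw [he]; exact Denumerable.ofNat_encode c
  obtain ⟨k₁, hk₁⟩ := (corr e (f (h e))).1 (Part.mem_some _)
  rw [← hc] at hk₁
  obtain ⟨k₂, hk₂⟩ := Nat.Partrec.Code.evaln_complete.1 hk₁
  -- the search predicate is satisfied at `Nat.pair k₁ k₂`
  have hT0 : RecFixAux.plainT (RecFixAux.pack A (Nat.pair e (Nat.pair k₁ k₂))) = 0 := by
    have hev : Nat.Partrec.Code.evaln k₂ c (Nat.pair (RecFixAux.Gfun A k₁) e)
        = Option.some (f (h e)) := hk₂
    simp [RecFixAux.plainT, RecFixAux.pack, Nat.unpair_pair, hoc, hev]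
  -- hence the rfind in `psi A e` converges
  have hdom : (Nat.rfind fun K => (fun m => m = 0) <$>
      Part.some (RecFixAux.plainT (RecFixAux.pack A (Nat.pair e K)))).Dom := by
    refine Nat.rfind_dom.2 ⟨Nat.pair k₁ k₂, ?_, fun {_} _ => ?_⟩
    · simp [Part.mem_map_iff, hT0]
    · simp [Part.map_eq_map]
  obtain ⟨K, hK⟩ := Part.dom_iff_mem.1 hdom
  have htrue := Nat.rfind_spec hK
  have hTK : RecFixAux.plainT (RecFixAux.pack A (Nat.pair e K)) = 0 := by
    obtain ⟨v, hv, ev⟩ := (Part.mem_map_iff _).1 htrue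
    have hveq : v = RecFixAux.plainT (RecFixAux.pack A (Nat.pair e K)) := Part.mem_some_iff.1 hv
    subst hveq
    exact of_decide_eq_true ev
  -- extract the value of the bounded evaluation
  have hsome : (Nat.Partrec.Code.evaln K.unpair.2 c
      (Nat.pair (RecFixAux.Gfun A K.unpair.1) e)).isSome = true := by
    have h' := hTK
    simp only [RecFixAux.plainT, RecFixAux.pack, Nat.unpair_pair, hoc] at h'
    cases hb : (Nat.Partrec.Code.evaln K.unpair.2 c
        (Nat.pair (RecFixAux.Gfun A K.unpair.1) e)).isSome with
    | false => rw [hb] at h'; simp at h'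
    | true => rfl
  obtain ⟨m', hm'⟩ := Option.isSome_iff_exists.1 hsome
  -- `m'` is a value of `psi A e`
  have hψe : m' ∈ RecFixAux.psi A e := by
    rw [RecFixAux.psi]
    refine Part.mem_bind_iff.2 ⟨Nat.pair e K, ?_, ?_⟩
    · simp only [Seq.seq, Part.bind_eq_bind, Part.mem_bind_iff, Part.mem_map_iff,
        Part.mem_some_iff]
      exact ⟨Nat.pair e, (Part.mem_map_iff _).2 ⟨e, Part.mem_some e, rfl⟩, K, hK, rfl⟩
    · simp only [RecFixAux.plainO, RecFixAux.pack, Nat.unpair_pair, hoc]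
      rw [hm']
      exact Part.mem_ofOption.2 rfl
  -- `m'` must equal `f (h e)`
  have hQm : m' ∈ Q (Nat.pair (RecFixAux.Gfun A K.unpair.1) e) := by
    rw [← hc]
    exact Nat.Partrec.Code.evaln_sound (hm' ▸ rfl : m' ∈ Nat.Partrec.Code.evaln K.unpair.2 c
      (Nat.pair (RecFixAux.Gfun A K.unpair.1) e))
  have hm'eq : m' = f (h e) := Part.mem_some_iff.1 ((corr e m').2 ⟨K.unpair.1, hQm⟩)
  refine ⟨h e, ?_⟩
  have hfix := hlift e m' hψe
  rwa [hm'eq] at hfix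
end

section
/- Let A, B ⊆ ℕ and let γ be a numbering. If for every total A-computable binary function h: ℕ × ℕ → ℕ there is a total B-computable function f: ℕ → ℕ such that h(n, f(n)) ∼_γ f(n) for all n, then A ≤_γ B. -/
open Nat Part

/-- If every total `A`-computable binary function has a
`B`-computable Skolem function for fixpoints modulo `γ`, then `A ≤_γ B`. -/
theorem gammaLE_of_skolem (γ : ℕ → ℕ → Prop) (hγ : Equivalence γ)
    (A B : Set ℕ)
    (hsk : ∀ h : ℕ → ℕ → ℕ, ComputableInSet₂ A h →
      ∃ f : ℕ → ℕ, ComputableInSet B f ∧ ∀ n : ℕ, γ (h n (f n)) (f n)) :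
    GammaLE γ A B := by
  intro f hf
  have hh : ComputableInSet₂ A (fun n _ => f n) := by
    have := RecursiveInSet.comp (g := (↑fun n : ℕ => n.unpair.1)) hf RecursiveInSet.left
    unfold ComputableInSet₂ ComputableInSet
    convert this using 2 with n
    simp [Part.bind_some]
  obtain ⟨g, hg, hgn⟩ := hsk _ hh
  exact ⟨g, hg, fun n => hgn n⟩
end
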